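/- arXiv:1603.05676 — 6 statements merged into one kernel-verified Lean document; each statement's English description precedes it below -/
import Mathlib

section
/- Let φ : ẑ → S¹_ℚ be the canonical homomorphism and π₁ : S¹_ℚ → S¹ the first projection. Then the sequence 0 → ẑ → S¹_ℚ → S¹ → 1 is exact: φ is injective, π₁ is surjective, and the range of φ equals the kernel of π₁. Moreover, for every positive integer n, the restriction of φ to the subgroup nẑ is injective with range equal to the kernel of π_n, and π_n is surjective. -/
open Complex Real Filter MeasureTheory

noncomputable section

/-- The profinite completion of `ℤ`: the inverse limit of the groups `ZMod n`
over the divisibility order. -/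
def Zhat : Type :=
  {a : (n : ℕ+) → ZMod n //
    ∀ (n k : ℕ+), ZMod.castHom
        (show ((n : ℕ+) : ℕ) ∣ ((n * k : ℕ+) : ℕ) by
          rw [PNat.mul_coe]; exact dvd_mul_right _ _)
        (ZMod n) (a (n * k)) = a n}

instance (n : ℕ) : TopologicalSpace (ZMod n) := ⊥

instance : TopologicalSpace Zhat := by unfold Zhat; infer_instance

instance : MeasurableSpace Zhat := borel _

instance : Zero Zhat := ⟨⟨fun _ => 0, fun _ _ => map_zero _⟩⟩

instance : Add Zhat :=
  ⟨fun a b => ⟨fun n => a.1 n + b.1 n, fun n k => by rw [map_add, a.2 n k, b.2 n k]⟩⟩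

/-- The canonical inclusion `ℤ → ẑ`. -/
def iotaZ (k : ℤ) : Zhat := ⟨fun n => (k : ZMod n), fun n m => by rw [map_intCast]⟩

/-- Multiplication by a natural number on `ẑ`. -/
def nsmulZ (c : ℕ) (a : Zhat) : Zhat :=
  ⟨fun n => (c : ZMod n) * a.1 n, fun n k => by rw [map_mul, map_natCast, a.2 n k]⟩

lemma exp_real_mul_I_norm (θ : ℝ) : ‖Complex.exp ((θ : ℂ) * Complex.I)‖ = 1 := by
  rw [Complex.norm_exp_ofReal_mul_I]

lemma exp_div_pow (θ : ℝ) (n k : ℕ+) :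
    Complex.exp (((θ / (((n * k : ℕ+) : ℕ)) : ℝ) : ℂ) * Complex.I) ^ ((k : ℕ+) : ℕ)
      = Complex.exp (((θ / ((n : ℕ+) : ℕ) : ℝ) : ℂ) * Complex.I) := by
  rw [← Complex.exp_nat_mul]
  congr 1
  have hn : (((n : ℕ+) : ℕ) : ℂ) ≠ 0 := by exact_mod_cast n.ne_zero
  have hk : (((k : ℕ+) : ℕ) : ℂ) ≠ 0 := by exact_mod_cast k.ne_zero
  rw [PNat.mul_coe]
  push_cast
  field_simp

lemma exp_div_powC (w : ℂ) (n k : ℕ+) :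
    Complex.exp (w / (((n * k : ℕ+) : ℕ) : ℂ)) ^ ((k : ℕ+) : ℕ)
      = Complex.exp (w / (((n : ℕ+) : ℕ) : ℂ)) := by
  rw [← Complex.exp_nat_mul]
  congr 1
  have hn : (((n : ℕ+) : ℕ) : ℂ) ≠ 0 := by exact_mod_cast n.ne_zero
  have hk : (((k : ℕ+) : ℕ) : ℂ) ≠ 0 := by exact_mod_cast k.ne_zero
  rw [PNat.mul_coe]
  push_cast
  field_simp

lemma exp_natCast_congr (n : ℕ+) (A B : ℕ)
    (h : (A : ZMod ((n : ℕ+) : ℕ)) = (B : ZMod ((n : ℕ+) : ℕ))) :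
    Complex.exp (((2 * π * A / ((n : ℕ+) : ℕ) : ℝ) : ℂ) * Complex.I)
      = Complex.exp (((2 * π * B / ((n : ℕ+) : ℕ) : ℝ) : ℂ) * Complex.I) := by
  rw [ZMod.natCast_eq_natCast_iff] at h
  obtain ⟨j, hj⟩ := Nat.modEq_iff_dvd.mp h
  have hn : ((((n : ℕ+) : ℕ) : ℝ)) ≠ 0 := by exact_mod_cast n.ne_zero
  have hB : (B : ℝ) = (A : ℝ) + (((n : ℕ+) : ℕ) : ℝ) * (j : ℝ) := by
    have : (B : ℤ) = (A : ℤ) + (((n : ℕ+) : ℕ) : ℤ) * j := by linarith [hj]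
    exact_mod_cast congrArg (fun t : ℤ => (t : ℝ)) this
  have key : ((2 * π * B / ((n : ℕ+) : ℕ) : ℝ) : ℂ) * Complex.I
      = ((2 * π * A / ((n : ℕ+) : ℕ) : ℝ) : ℂ) * Complex.I + (j : ℂ) * (2 * (π : ℂ) * Complex.I) := by
    have hnC : ((((n : ℕ+) : ℕ) : ℂ)) ≠ 0 := by exact_mod_cast n.ne_zero
    push_cast [hB]
    field_simp
  rw [key, Complex.exp_add, Complex.exp_int_mul_two_pi_mul_I, mul_one]

/-- The component at level `n` of the canonical map `ẑ → S¹_ℚ`,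
`l ↦ e^{2πil/n}`. -/
def phiComp (a : Zhat) (n : ℕ+) : ℂ :=
  Complex.exp (((2 * π * ((a.1 n).val : ℕ) / ((n : ℕ+) : ℕ) : ℝ) : ℂ) * Complex.I)

lemma phiComp_pow (a : Zhat) (n k : ℕ+) : phiComp a (n * k) ^ ((k : ℕ+) : ℕ) = phiComp a n := by
  unfold phiComp
  rw [exp_div_pow]
  haveI : NeZero (((n * k : ℕ+) : ℕ)) := ⟨(n * k).ne_zero⟩
  haveI : NeZero (((n : ℕ+) : ℕ)) := ⟨n.ne_zero⟩
  apply exp_natCast_congr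
  have h := a.2 n k
  rw [ZMod.castHom_apply] at h
  rw [ZMod.natCast_val, ZMod.natCast_val, ZMod.cast_id, h]

/-- The adelic solenoid `S¹_ℚ`: the inverse limit of the circles
`S¹ = {z ∈ ℂ : ‖z‖ = 1}` under the covering maps `z ↦ z^{m/n}` for `n ∣ m`. -/
def SolQ : Type :=
  {z : ℕ+ → ℂ // (∀ n, ‖z n‖ = 1) ∧ ∀ (n k : ℕ+), z (n * k) ^ ((k : ℕ+) : ℕ) = z n}

instance : TopologicalSpace SolQ := by unfold SolQ; infer_instance
instance : MeasurableSpace SolQ := borel _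

instance : Mul SolQ :=
  ⟨fun x y => ⟨fun n => x.1 n * y.1 n,
    ⟨fun n => by rw [norm_mul, x.2.1 n, y.2.1 n, one_mul],
     fun n k => by rw [mul_pow, x.2.2 n k, y.2.2 n k]⟩⟩⟩

instance : One SolQ := ⟨⟨fun _ => 1, ⟨fun _ => norm_one, fun _ _ => one_pow _⟩⟩⟩

/-- The canonical homomorphism `φ : ẑ → S¹_ℚ`, induced componentwise by
`l ↦ e^{2πil/n}`. -/
def phiS (a : Zhat) : SolQ :=
  ⟨fun n => phiComp a n, ⟨fun n => exp_real_mul_I_norm _, phiComp_pow a⟩⟩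

/-- The baseleaf `ν : ℝ → S¹_ℚ`, `ν(t) = (e^{it/n})ₙ`. -/
def nuS (t : ℝ) : SolQ :=
  ⟨fun n => Complex.exp (((t / ((n : ℕ+) : ℕ) : ℝ) : ℂ) * Complex.I),
   ⟨fun n => exp_real_mul_I_norm _, fun n k => exp_div_pow t n k⟩⟩

/-- `exp : ẑ × ℝ → S¹_ℚ`, `exp(a, θ) = φ(a)·ν(θ)`. -/
def expS (p : Zhat × ℝ) : SolQ := phiS p.1 * nuS p.2

/-- The algebraic solenoid `ℂ*_ℚ`: the inverse limit of copies of `ℂ* = ℂ \ {0}`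
under the covering maps `z ↦ z^{m/n}` for `n ∣ m`. -/
def CSolQ : Type :=
  {z : ℕ+ → ℂ // (∀ n, z n ≠ 0) ∧ ∀ (n k : ℕ+), z (n * k) ^ ((k : ℕ+) : ℕ) = z n}

instance : TopologicalSpace CSolQ := by unfold CSolQ; infer_instance
instance : MeasurableSpace CSolQ := borel _

instance : Mul CSolQ :=
  ⟨fun x y => ⟨fun n => x.1 n * y.1 n,
    ⟨fun n => mul_ne_zero (x.2.1 n) (y.2.1 n),
     fun n k => by rw [mul_pow, x.2.2 n k, y.2.2 n k]⟩⟩⟩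

instance : One CSolQ := ⟨⟨fun _ => 1, ⟨fun _ => one_ne_zero, fun _ _ => one_pow _⟩⟩⟩

/-- The canonical homomorphism `φ : ẑ → ℂ*_ℚ`. -/
def phiC (a : Zhat) : CSolQ :=
  ⟨fun n => phiComp a n, ⟨fun n => Complex.exp_ne_zero _, phiComp_pow a⟩⟩

/-- The baseleaf `ν : ℂ → ℂ*_ℚ`, `ν(z) = (e^{iz/n})ₙ`. -/
def nuC (z : ℂ) : CSolQ :=
  ⟨fun n => Complex.exp (Complex.I * z / (((n : ℕ+) : ℕ) : ℂ)),
   ⟨fun n => Complex.exp_ne_zero _, fun n k => exp_div_powC (Complex.I * z) n k⟩⟩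

/-- `exp : ẑ × ℂ → ℂ*_ℚ`, `exp(a, z) = φ(a)·ν(z)`. -/
def expC (a : Zhat) (z : ℂ) : CSolQ := phiC a * nuC z

/-- The `n`-th power map on the Riemann sphere `Ĉ = ℂ ∪ {∞}`, with `∞ ↦ ∞`. -/
def spherePow (k : ℕ) (x : OnePoint ℂ) : OnePoint ℂ :=
  Option.map (fun z : ℂ => z ^ k) x

/-- The adelic Riemann sphere `Ĉ_ℚ`: the inverse limit of Riemann spheres under
the branched covering maps `z ↦ z^{m/n}` for `n ∣ m`. -/
def SphereQ : Type :=
  {z : ℕ+ → OnePoint ℂ // ∀ (n k : ℕ+), spherePow ((k : ℕ+) : ℕ) (z (n * k)) = z n}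

instance : TopologicalSpace SphereQ := by unfold SphereQ; infer_instance

/-- The leaf maps `exp(a, ·) : ℂ → ℂ*_ℚ ⊂ Ĉ_ℚ` of the adelic Riemann sphere. -/
def expSph (a : Zhat) (z : ℂ) : SphereQ :=
  ⟨fun n => OnePoint.some (phiComp a n * Complex.exp (Complex.I * z / (((n : ℕ+) : ℕ) : ℂ))),
   fun n k => by
     show OnePoint.some ((phiComp a (n * k) * _) ^ ((k : ℕ+) : ℕ)) = _
     rw [mul_pow, phiComp_pow, exp_div_powC]⟩

/-- The renormalization operator `I_n` on functions on `ℂ*_ℚ`: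
the average of `μ` over the fiber `π_n⁻¹(π_n(x))`, namely
`I_n(μ)(x) = ∫_{ẑ} μ(φ(n·a)·x) dη(a)`. -/
def Iren (η : Measure Zhat) (n : ℕ+) (f : CSolQ → ℂ) (x : CSolQ) : ℂ :=
  ∫ a : Zhat, f (phiC (nsmulZ ((n : ℕ+) : ℕ) a) * x) ∂η

/-- The renormalization operator `I_n` on functions on `S¹_ℚ`. -/
def IrenS (η : Measure Zhat) (n : ℕ+) (f : SolQ → ℂ) (x : SolQ) : ℂ :=
  ∫ a : Zhat, f (phiS (nsmulZ ((n : ℕ+) : ℕ) a) * x) ∂η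

/-- The character `χ_q = (π_n)^m : S¹_ℚ → S¹` associated to a rational `q = m/n`. -/
def chiQ (q : ℚ) (x : SolQ) : ℂ := (x.1 ⟨q.den, q.den_pos⟩) ^ q.num

/-- A function `f : ℝ → ℂ` is limit periodic if for every `ε > 0` there is a
positive integer `N` such that `|f(x + 2πn) − f(x)| < ε` for all `x ∈ ℝ` and
all integers `n ∈ Nℤ`. -/
def LimitPeriodic (f : ℝ → ℂ) : Prop :=
  ∀ ε : ℝ, 0 < ε → ∃ N : ℕ+, ∀ x : ℝ, ∀ n : ℤ, ((N : ℕ+) : ℤ) ∣ n →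
    ‖f (x + 2 * π * n) - f x‖ < ε

/-- A function `f : ℂ → ℂ` is limit periodic with respect to `x` if for every
`ε > 0` and compact `K ⊆ ℝ` there is a positive integer `N` with
`|f(z + 2πn) − f(z)| < ε` for all `z` with `Im z ∈ K` and all `n ∈ Nℤ`. -/
def LimitPeriodicX (f : ℂ → ℂ) : Prop :=
  ∀ ε : ℝ, 0 < ε → ∀ K : Set ℝ, IsCompact K → ∃ N : ℕ+,
    ∀ z : ℂ, z.im ∈ K → ∀ n : ℤ, ((N : ℕ+) : ℤ) ∣ n →
      ‖f (z + 2 * π * n) - f z‖ < ε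


lemma exp_natCast_inj (n : ℕ+) (A B : ℕ)
    (h : Complex.exp (((2 * π * A / ((n : ℕ+) : ℕ) : ℝ) : ℂ) * Complex.I)
      = Complex.exp (((2 * π * B / ((n : ℕ+) : ℕ) : ℝ) : ℂ) * Complex.I)) :
    (A : ZMod ((n : ℕ+) : ℕ)) = (B : ZMod ((n : ℕ+) : ℕ)) := by
  rw [Complex.exp_eq_exp_iff_exists_int] at h
  obtain ⟨j, hj⟩ := h
  have him := congrArg Complex.im hj
  simp [Complex.add_im, Complex.mul_im] at him
  have hn : ((((n : ℕ+) : ℕ) : ℝ)) ≠ 0 := by exact_mod_cast n.ne_zero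
  have hπ : (π : ℝ) ≠ 0 := Real.pi_ne_zero
  have hA : (A : ℝ) = (B : ℝ) + (j : ℝ) * (((n : ℕ+) : ℕ) : ℝ) := by
    have h2π : (2 * π : ℝ) ≠ 0 := by positivity
    have h2 : 2 * π * (A : ℝ) = 2 * π * ((B : ℝ) + (j : ℝ) * (((n : ℕ+) : ℕ) : ℝ)) := by
      field_simp at him; rw [him]; ring
    exact mul_left_cancel₀ h2π h2
  have hAZ : (A : ℤ) = (B : ℤ) + j * (((n : ℕ+) : ℕ) : ℤ) := by exact_mod_cast hA
  have : (A : ZMod ((n : ℕ+) : ℕ)) = ((B + j * (((n : ℕ+) : ℕ) : ℤ) : ℤ) : ZMod ((n : ℕ+) : ℕ)) := by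
    exact_mod_cast congrArg (fun t : ℤ => (t : ZMod ((n : ℕ+) : ℕ))) hAZ
  rw [this]
  push_cast
  simp [ZMod.natCast_self]

lemma natCast_pnat_ne_zero (n : ℕ+) : (((n : ℕ+) : ℕ) : ℝ) ≠ 0 := by exact_mod_cast n.ne_zero

instance (n : ℕ+) : NeZero ((n : ℕ+) : ℕ) := ⟨n.ne_zero⟩

lemma val_natCast_exp (n : ℕ+) (B : ℕ) :
    Complex.exp (((2 * π * (((B : ZMod ((n : ℕ+) : ℕ))).val : ℕ) / ((n : ℕ+) : ℕ) : ℝ) : ℂ) * Complex.I)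
      = Complex.exp (((2 * π * B / ((n : ℕ+) : ℕ) : ℝ) : ℂ) * Complex.I) := by
  apply exp_natCast_congr
  rw [ZMod.natCast_val, ZMod.cast_id]

lemma exp_pow_form (n : ℕ+) (c : ℕ) :
    Complex.exp (2 * (π : ℂ) * Complex.I / (((n : ℕ+) : ℕ) : ℂ)) ^ c
      = Complex.exp (((2 * π * c / ((n : ℕ+) : ℕ) : ℝ) : ℂ) * Complex.I) := by
  rw [← Complex.exp_nat_mul]
  congr 1
  have hn : (((n : ℕ+) : ℕ) : ℂ) ≠ 0 := by exact_mod_cast n.ne_zero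
  push_cast
  field_simp

lemma phiS_injective : Function.Injective phiS := by
  intro a b h
  apply Subtype.ext
  funext n
  have hn : phiComp a n = phiComp b n := congrFun (congrArg Subtype.val h) n
  unfold phiComp at hn
  have := exp_natCast_inj n _ _ hn
  rwa [ZMod.natCast_val, ZMod.cast_id, ZMod.natCast_val, ZMod.cast_id] at this

lemma phiS_nsmul_comp_self (n : ℕ+) (a : Zhat) :
    (phiS (nsmulZ ((n : ℕ+) : ℕ) a)).1 n = 1 := by
  show phiComp (nsmulZ ((n : ℕ+) : ℕ) a) n = 1
  unfold phiComp
  have h0 : (nsmulZ ((n : ℕ+) : ℕ) a).1 n = 0 := by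
    show ((((n : ℕ+) : ℕ) : ZMod ((n : ℕ+) : ℕ))) * a.1 n = 0
    rw [ZMod.natCast_self, zero_mul]
  rw [h0, ZMod.val_zero]
  norm_num

lemma kernel_mem (n : ℕ+) (x : SolQ) (hx : x.1 n = 1) :
    ∃ a' : Zhat, phiS (nsmulZ ((n : ℕ+) : ℕ) a') = x := by
  -- for each m, pick c m with exp(2πi/m)^(c m) = x.1 (n*m)
  have hroot : ∀ m : ℕ+, ∃ c : ℕ, Complex.exp (2 * (π : ℂ) * Complex.I / (((m : ℕ+) : ℕ) : ℂ)) ^ c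
      = x.1 (n * m) := by
    intro m
    have hpow : x.1 (n * m) ^ ((m : ℕ+) : ℕ) = 1 := by rw [x.2.2 n m, hx]
    have hprim := Complex.isPrimitiveRoot_exp ((m : ℕ+) : ℕ) m.ne_zero
    obtain ⟨i, _, hi⟩ := hprim.eq_pow_of_pow_eq_one hpow
    exact ⟨i, hi⟩
  choose c hc using hroot
  have hcform : ∀ m : ℕ+,
      Complex.exp (((2 * π * (c m) / ((m : ℕ+) : ℕ) : ℝ) : ℂ) * Complex.I) = x.1 (n * m) := by
    intro m; rw [← exp_pow_form]; exact hc m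
  -- compatibility
  have hcompat : ∀ m k : ℕ+, ((c (m * k) : ZMod ((m : ℕ+) : ℕ))) = (c m : ZMod ((m : ℕ+) : ℕ)) := by
    intro m k
    apply exp_natCast_inj
    have h1 : Complex.exp (((2 * π * (c (m * k)) / ((m : ℕ+) : ℕ) : ℝ) : ℂ) * Complex.I)
        = x.1 (n * m) := by
      rw [← exp_div_pow (2 * π * (c (m * k))) m k, hcform (m * k)]
      have : n * (m * k) = (n * m) * k := by rw [mul_assoc]
      rw [this, x.2.2 (n * m) k]
    rw [h1, hcform m]
  set a' : Zhat := ⟨fun m => (c m : ZMod ((m : ℕ+) : ℕ)), fun m k => by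
    rw [map_natCast, hcompat m k]⟩ with ha'
  refine ⟨a', ?_⟩
  apply Subtype.ext
  funext m
  show phiComp _ m = x.1 m
  unfold phiComp
  have hval : ((nsmulZ ((n : ℕ+) : ℕ) a').1 m)
      = ((((n : ℕ+) : ℕ) * c m : ℕ) : ZMod ((m : ℕ+) : ℕ)) := by
    show ((((n : ℕ+) : ℕ) : ZMod ((m : ℕ+) : ℕ))) * (c m : ZMod ((m : ℕ+) : ℕ)) = _
    push_cast
    ring
  rw [hval, val_natCast_exp]
  -- now show exp(2π (n * c m)/m i) = x.1 m
  have hxm : x.1 m = x.1 (n * m) ^ ((n : ℕ+) : ℕ) := by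
    have : m * n = n * m := mul_comm m n
    rw [← x.2.2 m n, this]
  rw [hxm, ← hcform m, ← Complex.exp_nat_mul]
  congr 1
  have hm : (((m : ℕ+) : ℕ) : ℂ) ≠ 0 := by exact_mod_cast m.ne_zero
  push_cast
  field_simp


/-- The sequence `0 → ẑ → S¹_ℚ → S¹ → 1` is exact: the canonical
homomorphism `φ` is injective, `π₁` is surjective onto the circle, and the range of
`φ` equals the kernel of `π₁`.  Moreover, for every positive integer `n`, the
restriction of `φ` to `nẑ` is injective with range equal to the kernel of `π_n`,
and `π_n` is surjective. -/
theorem statement0 :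
    (∀ a b : Zhat, phiS (a + b) = phiS a * phiS b) ∧
    Function.Injective phiS ∧
    (∀ w : ℂ, ‖w‖ = 1 → ∃ x : SolQ, x.1 1 = w) ∧
    (∀ x : SolQ, (∃ a : Zhat, phiS a = x) ↔ x.1 1 = 1) ∧
    (∀ n : ℕ+,
      (∀ w : ℂ, ‖w‖ = 1 → ∃ x : SolQ, x.1 n = w) ∧
      (∀ a b : Zhat, (∃ a', a = nsmulZ ((n : ℕ+) : ℕ) a') →
        (∃ b', b = nsmulZ ((n : ℕ+) : ℕ) b') → phiS a = phiS b → a = b) ∧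
      (∀ x : SolQ,
        (∃ a : Zhat, (∃ a', a = nsmulZ ((n : ℕ+) : ℕ) a') ∧ phiS a = x) ↔ x.1 n = 1)) := by
  have surj : ∀ n : ℕ+, ∀ w : ℂ, ‖w‖ = 1 → ∃ x : SolQ, x.1 n = w := by
    intro n w hw
    refine ⟨nuS ((((n : ℕ+) : ℕ) : ℝ) * Complex.arg w), ?_⟩
    show Complex.exp _ = w
    have hn : (((n : ℕ+) : ℕ) : ℝ) ≠ 0 := natCast_pnat_ne_zero n
    have harg : ((((n : ℕ+) : ℕ) : ℝ) * Complex.arg w / (((n : ℕ+) : ℕ) : ℝ)) = Complex.arg w := by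
      field_simp
    rw [harg]
    have habs : ‖w‖ = 1 := hw
    have := Complex.norm_mul_exp_arg_mul_I w
    rw [habs] at this
    simpa using this
  refine ⟨?_, phiS_injective, surj 1, ?_, ?_⟩
  · intro a b
    apply Subtype.ext
    funext n
    show phiComp (a + b) n = phiComp a n * phiComp b n
    unfold phiComp
    have hval : ((a + b).1 n) = (((a.1 n).val + (b.1 n).val : ℕ) : ZMod ((n : ℕ+) : ℕ)) := by
      show a.1 n + b.1 n = _
      push_cast
      rw [ZMod.natCast_val, ZMod.cast_id, ZMod.natCast_val, ZMod.cast_id]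
    rw [hval, val_natCast_exp, ← Complex.exp_add]
    congr 1
    have hn : (((n : ℕ+) : ℕ) : ℂ) ≠ 0 := by exact_mod_cast n.ne_zero
    push_cast
    field_simp
  · intro x
    constructor
    · rintro ⟨a, rfl⟩
      show phiComp a 1 = 1
      unfold phiComp
      have hv : (a.1 1).val = 0 := Nat.lt_one_iff.mp (ZMod.val_lt _)
      rw [hv]
      norm_num
    · intro hx
      obtain ⟨a', ha'⟩ := kernel_mem 1 x hx
      exact ⟨_, ha'⟩
  · intro n
    refine ⟨surj n, fun a b _ _ h => phiS_injective h, ?_⟩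
    intro x
    constructor
    · rintro ⟨a, ⟨a', rfl⟩, rfl⟩
      exact phiS_nsmul_comp_self n a'
    · intro hx
      obtain ⟨a', ha'⟩ := kernel_mem n x hx
      exact ⟨_, ⟨a', rfl⟩, ha'⟩

end
end

section
/- The map exp : ẑ × ℝ → S¹_ℚ, exp(a, θ) = φ(a)·ν(θ), is a local homeomorphism, and π₁ : S¹_ℚ → S¹ is a fiber bundle with fiber homeomorphic to ẑ; in particular π₁ admits local trivializations over every open arc of S¹ of arclength less than 2π. -/
open Complex Real Filter MeasureTheory

noncomputable section

namespace St2
open Complex Real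

instance (n : ℕ) : DiscreteTopology (ZMod n) := ⟨rfl⟩

/-- canonical root of unity exponential -/
def eC (n : ℕ+) (A : ℤ) : ℂ := Complex.exp (((2 * π * A / ((n : ℕ+) : ℕ) : ℝ) : ℂ) * Complex.I)

lemma eC_eq_iff (n : ℕ+) (A B : ℤ) : eC n A = eC n B ↔ ((A : ZMod n) = (B : ZMod n)) := by
  unfold eC
  rw [Complex.exp_eq_exp_iff_exists_int]
  have hn : (((n : ℕ+) : ℕ) : ℂ) ≠ 0 := by exact_mod_cast n.ne_zero
  have hπ : (π : ℂ) ≠ 0 := by exact_mod_cast Real.pi_ne_zero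
  constructor
  · rintro ⟨m, hm⟩
    have h2 : (A : ℂ) = (B : ℂ) + m * ((n : ℕ+) : ℕ) := by
      push_cast at hm
      field_simp at hm
      have h4 : (2 * (π:ℂ) * Complex.I) * A = (2 * (π:ℂ) * Complex.I) * ((B:ℂ) + m * ((n : ℕ+) : ℕ)) := by
        linear_combination (2 * (π:ℂ) * Complex.I) * hm
      exact mul_left_cancel₀ (by simp [hπ, Complex.I_ne_zero]) h4
    have h3 : A = B + m * ((n : ℕ+) : ℕ) := by exact_mod_cast h2
    rw [h3]; push_cast [ZMod.natCast_self]; ring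
  · intro h
    rw [ZMod.intCast_eq_intCast_iff] at h
    obtain ⟨m, hm⟩ := h.dvd
    refine ⟨-m, ?_⟩
    have h3 : (A : ℂ) = (B : ℂ) + (-m : ℤ) * ((n : ℕ+) : ℕ) := by
      exact_mod_cast (by linarith [hm] : (A:ℤ) = B + (-m) * ((n : ℕ+) : ℕ))
    push_cast [h3]
    field_simp
/-- index of a root of unity -/
def rootIdx (n : ℕ+) (r : ℂ) : ℤ := round (((n : ℕ+) : ℕ) * r.arg / (2 * π))

lemma rootIdx_spec {n : ℕ+} {r : ℂ} (hr : r ^ ((n : ℕ+) : ℕ) = 1) :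
    eC n (rootIdx n r) = r := by
  have habs : ‖r‖ = 1 := by
    exact Complex.norm_eq_one_of_pow_eq_one hr n.ne_zero
  have h0 : r = Complex.exp ((r.arg : ℂ) * Complex.I) := by
    conv_lhs => rw [← Complex.norm_mul_exp_arg_mul_I r]
    rw [habs, Complex.ofReal_one, one_mul]
  have h2 : Complex.exp ((((n : ℕ+) : ℕ) : ℂ) * ((r.arg : ℂ) * Complex.I)) = 1 := by
    rw [Complex.exp_nat_mul, ← h0, hr]
  obtain ⟨m, hm⟩ := Complex.exp_eq_one_iff.mp h2
  have hm' : (((n : ℕ+) : ℕ) : ℝ) * r.arg = m * (2 * π) := by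
    have := congrArg Complex.im hm
    simpa using this
  have hnR : (((n : ℕ+) : ℕ) : ℝ) ≠ 0 := by exact_mod_cast n.ne_zero
  have hround : rootIdx n r = m := by
    unfold rootIdx
    rw [hm', mul_div_assoc, div_self (by positivity), mul_one, round_intCast]
  rw [hround]
  unfold eC
  rw [h0]
  congr 1
  have harg : r.arg = 2 * π * m / (((n : ℕ+) : ℕ) : ℝ) := by
    field_simp
    linarith [hm']
  rw [harg]
lemma phiComp_eq_eC (a : Zhat) (n : ℕ+) : phiComp a n = eC n (((a.1 n).val : ℕ) : ℤ) := by
  unfold phiComp eC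
  norm_num

lemma intCast_val (a : Zhat) (n : ℕ+) : ((((a.1 n).val : ℕ) : ℤ) : ZMod n) = a.1 n := by
  haveI : NeZero ((n : ℕ+) : ℕ) := ⟨n.ne_zero⟩
  push_cast
  rw [ZMod.natCast_val, ZMod.cast_id]

lemma phiComp_eq_of {a : Zhat} {n : ℕ+} {A : ℤ} (h : (A : ZMod n) = a.1 n) :
    phiComp a n = eC n A := by
  rw [phiComp_eq_eC, eC_eq_iff, intCast_val, h]

lemma phiComp_one (a : Zhat) : phiComp a 1 = 1 := by
  haveI : NeZero ((1 : ℕ+) : ℕ) := ⟨one_ne_zero⟩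
  have h : (a.1 1).val = 0 := Nat.lt_one_iff.mp (ZMod.val_lt _)
  unfold phiComp
  rw [h]
  norm_num

lemma expS_apply (p : Zhat × ℝ) (n : ℕ+) :
    (expS p).1 n = phiComp p.1 n *
      Complex.exp (((p.2 / ((n : ℕ+) : ℕ) : ℝ) : ℂ) * Complex.I) := rfl

lemma expS_fst (p : Zhat × ℝ) : (expS p).1 1 = Complex.exp ((p.2 : ℂ) * Complex.I) := by
  rw [expS_apply, phiComp_one, one_mul]
  norm_num

lemma solq_pow (x : SolQ) (n : ℕ+) : x.1 n ^ ((n : ℕ+) : ℕ) = x.1 1 := by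
  have h := x.2.2 1 n
  rwa [one_mul] at h

lemma exp_div_pow' (θ : ℝ) (n : ℕ+) :
    Complex.exp (((θ / ((n : ℕ+) : ℕ) : ℝ) : ℂ) * Complex.I) ^ ((n : ℕ+) : ℕ)
      = Complex.exp ((θ : ℂ) * Complex.I) := by
  have h := exp_div_pow θ 1 n
  rw [show (1 * n : ℕ+) = n from one_mul n] at h
  simpa using h

lemma eC_pow (n k : ℕ+) (A : ℤ) : eC (n * k) A ^ ((k : ℕ+) : ℕ) = eC n A :=
  exp_div_pow (2 * π * A) n k

/-- the ratio `x_n / e^{iθ/n}` -/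
def rFun (x : SolQ) (θ : ℝ) (n : ℕ+) : ℂ :=
  x.1 n / Complex.exp (((θ / ((n : ℕ+) : ℕ) : ℝ) : ℂ) * Complex.I)

lemma rFun_pow {x : SolQ} {θ : ℝ} (hθ : x.1 1 = Complex.exp ((θ : ℂ) * Complex.I)) (n : ℕ+) :
    rFun x θ n ^ ((n : ℕ+) : ℕ) = 1 := by
  unfold rFun
  rw [div_pow, solq_pow, exp_div_pow', hθ, div_self (Complex.exp_ne_zero _)]

lemma rFun_pow' (x : SolQ) (θ : ℝ) (n k : ℕ+) :
    rFun x θ (n * k) ^ ((k : ℕ+) : ℕ) = rFun x θ n := by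
  unfold rFun
  rw [div_pow, x.2.2 n k, exp_div_pow θ n k]

/-- level-`n` index -/
def aFun (x : SolQ) (θ : ℝ) (n : ℕ+) : ZMod n := ((rootIdx n (rFun x θ n) : ℤ) : ZMod n)

lemma aFun_compat {x : SolQ} {θ : ℝ} (hθ : x.1 1 = Complex.exp ((θ : ℂ) * Complex.I)) :
    ∀ (n k : ℕ+), ZMod.castHom
        (show ((n : ℕ+) : ℕ) ∣ ((n * k : ℕ+) : ℕ) by
          rw [PNat.mul_coe]; exact dvd_mul_right _ _)
        (ZMod n) (aFun x θ (n * k)) = aFun x θ n := by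
  intro n k
  unfold aFun
  rw [map_intCast]
  rw [← eC_eq_iff]
  have h1 : eC (n * k) (rootIdx (n * k) (rFun x θ (n * k))) = rFun x θ (n * k) :=
    rootIdx_spec (rFun_pow hθ (n * k))
  have h2 : eC n (rootIdx n (rFun x θ n)) = rFun x θ n := rootIdx_spec (rFun_pow hθ n)
  rw [← eC_pow n k, h1, rFun_pow']
  exact h2.symm

open Classical in
/-- the `ẑ`-coordinate of `x` relative to angle `θ` -/
def aOf (x : SolQ) (θ : ℝ) : Zhat :=
  if h : ∀ (n k : ℕ+), ZMod.castHom
        (show ((n : ℕ+) : ℕ) ∣ ((n * k : ℕ+) : ℕ) by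
          rw [PNat.mul_coe]; exact dvd_mul_right _ _)
        (ZMod n) (aFun x θ (n * k)) = aFun x θ n
  then ⟨aFun x θ, h⟩ else 0

lemma aOf_apply {x : SolQ} {θ : ℝ} (hθ : x.1 1 = Complex.exp ((θ : ℂ) * Complex.I)) (n : ℕ+) :
    (aOf x θ).1 n = aFun x θ n := by
  have e : aOf x θ = ⟨aFun x θ, aFun_compat hθ⟩ := dif_pos (aFun_compat hθ)
  rw [e]

lemma expS_aOf {x : SolQ} {θ : ℝ} (hθ : x.1 1 = Complex.exp ((θ : ℂ) * Complex.I)) :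
    expS (aOf x θ, θ) = x := by
  apply Subtype.ext
  funext n
  rw [expS_apply]
  have h1 : phiComp (aOf x θ) n = eC n (rootIdx n (rFun x θ n)) := by
    apply phiComp_eq_of
    rw [aOf_apply hθ n]
    rfl
  rw [h1, rootIdx_spec (rFun_pow hθ n)]
  exact div_mul_cancel₀ _ (Complex.exp_ne_zero _)

lemma aOf_expS (b : Zhat) (θ : ℝ) : aOf (expS (b, θ)) θ = b := by
  have hθ : (expS (b, θ)).1 1 = Complex.exp ((θ : ℂ) * Complex.I) := expS_fst _
  apply Subtype.ext
  funext n
  rw [aOf_apply hθ n]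
  unfold aFun
  have hr : rFun (expS (b, θ)) θ n = phiComp b n := by
    unfold rFun
    rw [expS_apply]
    exact mul_div_cancel_right₀ _ (Complex.exp_ne_zero _)
  rw [← intCast_val b n, ← eC_eq_iff, ← phiComp_eq_eC, ← hr,
    rootIdx_spec (rFun_pow hθ n)]
lemma arg_exp_of {φ : ℝ} (h : |φ| < π) : (Complex.exp ((φ : ℂ) * Complex.I)).arg = φ := by
  rw [Complex.arg_exp_mul_I]
  rw [toIocMod_eq_self]
  obtain ⟨h1, h2⟩ := abs_lt.mp h
  constructor <;> [linarith; linarith]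

/-- angle coordinate relative to center `t₀` -/
def thOf (t₀ : ℝ) (w : ℂ) : ℝ := t₀ + (w * Complex.exp (((-t₀ : ℝ) : ℂ) * Complex.I)).arg

lemma exp_mul_exp_neg (θ t₀ : ℝ) :
    Complex.exp ((θ : ℂ) * Complex.I) * Complex.exp (((-t₀ : ℝ) : ℂ) * Complex.I)
      = Complex.exp (((θ - t₀ : ℝ) : ℂ) * Complex.I) := by
  rw [← Complex.exp_add]
  congr 1
  push_cast
  ring

lemma thOf_exp {t₀ θ : ℝ} (h : |θ - t₀| < π) :
    thOf t₀ (Complex.exp ((θ : ℂ) * Complex.I)) = θ := by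
  unfold thOf
  rw [exp_mul_exp_neg, arg_exp_of h]
  ring

/-- the open arc of aperture `L` around `t₀` -/
def Arc (t₀ L : ℝ) : Set ℂ :=
  {w : ℂ | ∃ θ : ℝ, |θ - t₀| < L / 2 ∧ w = Complex.exp ((θ : ℂ) * Complex.I)}

lemma arc_spec {t₀ L : ℝ} (hL2 : L < 2 * π) {w : ℂ} (hw : w ∈ Arc t₀ L) :
    |thOf t₀ w - t₀| < L / 2 ∧ w = Complex.exp (((thOf t₀ w : ℝ) : ℂ) * Complex.I) := by
  obtain ⟨θ, h1, rfl⟩ := hw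
  rw [thOf_exp (lt_of_lt_of_le h1 (by linarith))]
  exact ⟨h1, rfl⟩

/-- ambient open set cutting out the arc -/
def UU (t₀ L : ℝ) : Set ℂ :=
  {z : ℂ | z * Complex.exp (((-t₀ : ℝ) : ℂ) * Complex.I) ∈ Complex.slitPlane ∧
    |(z * Complex.exp (((-t₀ : ℝ) : ℂ) * Complex.I)).arg| < L / 2}

lemma isOpen_UU (t₀ L : ℝ) : IsOpen (UU t₀ L) := by
  have hV : IsOpen {u : ℂ | u ∈ Complex.slitPlane ∧ |u.arg| < L / 2} := by
    have := ContinuousOn.isOpen_inter_preimage (s := Complex.slitPlane)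
      (t := Set.Iio (L / 2)) (f := fun u : ℂ => |u.arg|)
      (fun u hu => ((Complex.continuousAt_arg hu).abs).continuousWithinAt)
      Complex.isOpen_slitPlane isOpen_Iio
    exact this
  exact hV.preimage (continuous_mul_right _)

lemma arc_subset_UU {t₀ L : ℝ} (hL2 : L < 2 * π) : Arc t₀ L ⊆ UU t₀ L := by
  rintro w ⟨θ, h1, rfl⟩
  have hpi : |θ - t₀| < π := lt_of_lt_of_le h1 (by linarith)
  rw [UU, Set.mem_setOf_eq, exp_mul_exp_neg, arg_exp_of hpi]
  refine ⟨Complex.mem_slitPlane_iff_arg.mpr ⟨?_, Complex.exp_ne_zero _⟩, ?_⟩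
  · rw [arg_exp_of hpi]
    intro h
    rw [h] at hpi
    simp [abs_of_pos Real.pi_pos] at hpi
  · exact h1

lemma UU_subset_arc {t₀ L : ℝ} {w : ℂ} (hw1 : ‖w‖ = 1) (hw : w ∈ UU t₀ L) : w ∈ Arc t₀ L := by
  obtain ⟨hs, ha⟩ := hw
  set u := w * Complex.exp (((-t₀ : ℝ) : ℂ) * Complex.I) with hu
  have habs : ‖u‖ = 1 := by
    rw [hu]
    rw [norm_mul]
    rw [hw1, exp_real_mul_I_norm, one_mul]
  refine ⟨t₀ + u.arg, by simpa using ha, ?_⟩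
  have h1 : u = Complex.exp ((u.arg : ℂ) * Complex.I) := by
    conv_lhs => rw [← Complex.norm_mul_exp_arg_mul_I u]
    rw [habs, Complex.ofReal_one, one_mul]
  have h2 : w = u * Complex.exp ((t₀ : ℝ) * Complex.I) := by
    rw [hu, mul_assoc, ← Complex.exp_add]
    norm_num
  have h3 : Complex.exp (((t₀ + u.arg : ℝ) : ℂ) * Complex.I)
      = Complex.exp ((u.arg : ℂ) * Complex.I) * Complex.exp ((t₀ : ℂ) * Complex.I) := by
    rw [← Complex.exp_add]
    push_cast
    ring_nf
  rw [h3, ← h1]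
  exact h2

lemma thOf_arc_exp {t₀ L : ℝ} (hL2 : L < 2 * π) {w : ℂ} (hw : w ∈ Arc t₀ L) :
    Complex.exp (((thOf t₀ w : ℝ) : ℂ) * Complex.I) = w := ((arc_spec hL2 hw).2).symm

/-- the open "tube" over the arc -/
def TT (t₀ L : ℝ) : Set SolQ := {x : SolQ | x.1 1 ∈ Arc t₀ L}

lemma isOpen_TT {t₀ L : ℝ} (hL2 : L < 2 * π) : IsOpen (TT t₀ L) := by
  have heq : TT t₀ L = (fun x : SolQ => x.1 1) ⁻¹' UU t₀ L := by
    ext x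
    exact ⟨fun h => arc_subset_UU hL2 h, fun h => UU_subset_arc (x.2.1 1) h⟩
  rw [heq]
  exact (isOpen_UU t₀ L).preimage ((continuous_apply 1).comp continuous_subtype_val)
lemma continuous_eval (n : ℕ+) : Continuous (fun x : SolQ => x.1 n) :=
  (continuous_apply n).comp continuous_subtype_val

lemma continuous_evalZ (n : ℕ+) : Continuous (fun a : Zhat => a.1 n) :=
  (continuous_apply n).comp continuous_subtype_val

lemma continuous_phiComp (n : ℕ+) : Continuous (fun a : Zhat => phiComp a n) := by
  have h2 : Continuous (fun c : ZMod ((n : ℕ+) : ℕ) =>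
      Complex.exp (((2 * π * (c.val : ℕ) / ((n : ℕ+) : ℕ) : ℝ) : ℂ) * Complex.I)) :=
    continuous_of_discreteTopology
  exact h2.comp (continuous_evalZ n)

lemma continuous_nuComp (n : ℕ+) :
    Continuous (fun t : ℝ => Complex.exp (((t / ((n : ℕ+) : ℕ) : ℝ) : ℂ) * Complex.I)) :=
  Complex.continuous_exp.comp
    ((Complex.continuous_ofReal.comp (continuous_id.div_const _)).mul continuous_const)

lemma isInducing_solq : Topology.IsInducing (Subtype.val : SolQ → (ℕ+ → ℂ)) := ⟨rfl⟩
lemma isInducing_zhat : Topology.IsInducing (Subtype.val : Zhat → ((n : ℕ+) → ZMod n)) := ⟨rfl⟩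

lemma continuous_expS : Continuous expS := by
  refine isInducing_solq.continuous_iff.mpr ?_
  apply continuous_pi
  intro n
  exact ((continuous_phiComp n).comp continuous_fst).mul
    ((continuous_nuComp n).comp continuous_snd)

lemma contAt_thOf {t₀ L : ℝ} {w : ℂ} (hw : w ∈ UU t₀ L) : ContinuousAt (thOf t₀) w := by
  have h1 : ContinuousAt (fun z : ℂ => z * Complex.exp (((-t₀ : ℝ) : ℂ) * Complex.I)) w :=
    (continuous_mul_right _).continuousAt
  have h2 : ContinuousAt (fun z : ℂ => (z * Complex.exp (((-t₀ : ℝ) : ℂ) * Complex.I)).arg) w :=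
    ContinuousAt.comp (x := w)
      (f := fun z : ℂ => z * Complex.exp (((-t₀ : ℝ) : ℂ) * Complex.I))
      (Complex.continuousAt_arg hw.1) h1
  exact continuousAt_const.add h2

lemma roots_finite (n : ℕ+) : {z : ℂ | z ^ ((n : ℕ+) : ℕ) = 1}.Finite := by
  refine Set.Finite.subset (Polynomial.nthRoots ((n : ℕ+) : ℕ) (1 : ℂ)).toFinset.finite_toSet ?_
  intro z hz
  rw [Finset.mem_coe, Multiset.mem_toFinset, Polynomial.mem_nthRoots n.pos]
  exact hz

lemma eventually_const_of_roots {X : Type*} [TopologicalSpace X] {g : X → ℂ} {n : ℕ+} {x : X}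
    (hg : ContinuousAt g x) (hmem : ∀ᶠ y in nhds x, g y ^ ((n : ℕ+) : ℕ) = 1) :
    ∀ᶠ y in nhds x, g y = g x := by
  have hfin : ({z : ℂ | z ^ ((n : ℕ+) : ℕ) = 1} \ {g x}).Finite := (roots_finite n).diff
  have hW : ({z : ℂ | z ^ ((n : ℕ+) : ℕ) = 1} \ {g x})ᶜ ∈ nhds (g x) :=
    hfin.isClosed.isOpen_compl.mem_nhds (fun h => h.2 rfl)
  filter_upwards [hg.preimage_mem_nhds hW, hmem] with y h1 h2
  by_contra hne
  exact h1 ⟨h2, hne⟩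

lemma contAt_rootIdx_comp {X : Type*} [TopologicalSpace X] {n : ℕ+} {g : X → ℂ} {x : X}
    (hg : ContinuousAt g x) (hmem : ∀ᶠ y in nhds x, g y ^ ((n : ℕ+) : ℕ) = 1) :
    ContinuousAt (fun y => ((rootIdx n (g y) : ℤ) : ZMod n)) x := by
  refine ContinuousAt.congr (continuousAt_const (y := ((rootIdx n (g x) : ℤ) : ZMod n))) ?_
  filter_upwards [eventually_const_of_roots hg hmem] with y hy
  rw [hy]
lemma contAt_aOf_gen {X : Type*} [TopologicalSpace X] {σ : X → SolQ} {τ : X → ℝ} {x : X}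
    (hσ : ContinuousAt σ x) (hτ : ContinuousAt τ x)
    (hmem : ∀ᶠ y in nhds x, (σ y).1 1 = Complex.exp (((τ y : ℝ) : ℂ) * Complex.I)) :
    ContinuousAt (fun y => aOf (σ y) (τ y)) x := by
  refine isInducing_zhat.continuousAt_iff.mpr ?_
  have hA : ContinuousAt (fun y => fun n : ℕ+ => aFun (σ y) (τ y) n) x := by
    apply continuousAt_pi.mpr
    intro n
    apply contAt_rootIdx_comp (g := fun y => rFun (σ y) (τ y) n)
    · have hnum : ContinuousAt (fun y => (σ y).1 n) x := by
        exact ContinuousAt.comp (x := x) (f := σ) (continuous_eval n).continuousAt hσ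
      have hden : ContinuousAt
          (fun y => Complex.exp (((τ y / ((n : ℕ+) : ℕ) : ℝ) : ℂ) * Complex.I)) x := by
        exact ContinuousAt.comp (x := x) (f := τ) (continuous_nuComp n).continuousAt hτ
      exact hnum.div hden (fun h => Complex.exp_ne_zero _ h)
    · filter_upwards [hmem] with y hy using rFun_pow hy n
  refine hA.congr ?_
  filter_upwards [hmem] with y hy
  funext n
  exact (aOf_apply hy n).symm

lemma contAt_thx {t₀ L : ℝ} (hL2 : L < 2 * π) {x : SolQ} (hx : x ∈ TT t₀ L) :
    ContinuousAt (fun y : SolQ => thOf t₀ (y.1 1)) x :=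
  ContinuousAt.comp (x := x) (f := fun y : SolQ => y.1 1)
    (contAt_thOf (arc_subset_UU hL2 hx)) (continuous_eval 1).continuousAt

lemma TT_eventually {t₀ L : ℝ} (hL2 : L < 2 * π) {x : SolQ} (hx : x ∈ TT t₀ L) :
    ∀ᶠ y in nhds x, y.1 1 = Complex.exp (((thOf t₀ (y.1 1) : ℝ) : ℂ) * Complex.I) := by
  filter_upwards [(isOpen_TT hL2).mem_nhds hx] with y hy using (arc_spec hL2 hy).2

lemma contAt_aOfth {t₀ L : ℝ} (hL2 : L < 2 * π) {x : SolQ} (hx : x ∈ TT t₀ L) :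
    ContinuousAt (fun y : SolQ => aOf y (thOf t₀ (y.1 1))) x :=
  contAt_aOf_gen continuousAt_id (contAt_thx hL2 hx) (TT_eventually hL2 hx)

/-- the local trivialization over the arc, as a partial homeomorphism -/
def mkPartial (t₀ L : ℝ) (hL0 : 0 < L) (hL2 : L < 2 * π) : OpenPartialHomeomorph (Zhat × ℝ) SolQ where
  toFun := expS
  invFun := fun y => (aOf y (thOf t₀ (y.1 1)), thOf t₀ (y.1 1))
  source := {p : Zhat × ℝ | |p.2 - t₀| < L / 2}
  target := TT t₀ L
  map_source' := fun p hp => ⟨p.2, hp, (expS_fst p)⟩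
  map_target' := fun y hy => (arc_spec hL2 hy).1
  left_inv' := fun p hp => by
    have h1 : thOf t₀ ((expS p).1 1) = p.2 := by
      rw [expS_fst]
      exact thOf_exp (lt_trans hp (by linarith))
    have h2 : aOf (expS p) (thOf t₀ ((expS p).1 1)) = p.1 := by
      rw [h1]
      exact aOf_expS p.1 p.2
    exact Prod.ext h2 h1
  right_inv' := fun y hy => expS_aOf (arc_spec hL2 hy).2
  open_source := by
    have : IsOpen {p : Zhat × ℝ | |p.2 - t₀| < L / 2} :=
      isOpen_lt ((continuous_snd.sub continuous_const).abs) continuous_const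
    exact this
  open_target := isOpen_TT hL2
  continuousOn_toFun := continuous_expS.continuousOn
  continuousOn_invFun := fun y hy =>
    (ContinuousAt.prodMk (contAt_aOfth hL2 hy) (contAt_thx hL2 hy)).continuousWithinAt
lemma unit_eq_exp_arg {w : ℂ} (hw : ‖w‖ = 1) :
    w = Complex.exp ((w.arg : ℂ) * Complex.I) := by
  have h := Complex.norm_mul_exp_arg_mul_I w
  rw [hw] at h
  simpa using h.symm

/-- fiber of `π₁` over a unit complex number, homeomorphic to `ẑ` -/
def fiberHomeo (w : ℂ) (hw : ‖w‖ = 1) : {x : SolQ // x.1 1 = w} ≃ₜ Zhat where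
  toFun x := aOf x.1 w.arg
  invFun a := ⟨expS (a, w.arg), by rw [expS_fst]; exact (unit_eq_exp_arg hw).symm⟩
  left_inv x := Subtype.ext (expS_aOf (x.2.trans (unit_eq_exp_arg hw)))
  right_inv a := aOf_expS a w.arg
  continuous_toFun := by
    apply continuous_iff_continuousAt.mpr
    intro x
    have := contAt_aOf_gen (X := {x : SolQ // x.1 1 = w})
      (σ := fun y => y.1) (τ := fun _ => w.arg) (x := x)
      continuous_subtype_val.continuousAt continuousAt_const
      (Filter.Eventually.of_forall fun y => by
        show (y.1).1 1 = _
        rw [y.2]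
        exact unit_eq_exp_arg hw)
    exact this
  continuous_invFun := by
    apply Continuous.subtype_mk
    exact continuous_expS.comp (continuous_id.prodMk continuous_const)

/-- trivialization of the tube over an arc -/
def arcHomeo (t₀ L : ℝ) (hL0 : 0 < L) (hL2 : L < 2 * π) :
    ↥(TT t₀ L) ≃ₜ (↥(Arc t₀ L) × Zhat) where
  toFun x := (⟨x.1.1 1, x.2⟩, aOf x.1 (thOf t₀ (x.1.1 1)))
  invFun p := ⟨expS (p.2, thOf t₀ p.1.1),
    by show (expS (p.2, thOf t₀ p.1.1)).1 1 ∈ Arc t₀ L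
       rw [expS_fst]
       show Complex.exp (((thOf t₀ (p.1.1 : ℂ) : ℝ) : ℂ) * Complex.I) ∈ Arc t₀ L
       rw [thOf_arc_exp hL2 p.1.2]
       exact p.1.2⟩
  left_inv x := Subtype.ext (expS_aOf (arc_spec hL2 x.2).2)
  right_inv p := by
    obtain ⟨⟨w, hw⟩, a⟩ := p
    have h1 : (expS (a, thOf t₀ w)).1 1 = w := by
      rw [expS_fst]
      exact thOf_arc_exp hL2 hw
    refine Prod.ext (Subtype.ext ?_) ?_
    · exact h1
    · show aOf (expS (a, thOf t₀ w)) (thOf t₀ ((expS (a, thOf t₀ w)).1 1)) = a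
      rw [h1]
      exact aOf_expS a _
  continuous_toFun := by
    refine Continuous.prodMk
      (Continuous.subtype_mk ((continuous_eval 1).comp continuous_subtype_val) _) ?_
    apply continuous_iff_continuousAt.mpr
    intro x
    exact ContinuousAt.comp (x := x) (f := (Subtype.val : ↥(TT t₀ L) → SolQ))
      (contAt_aOfth hL2 x.2) continuous_subtype_val.continuousAt
  continuous_invFun := by
    have hraw : Continuous (fun p : ↥(Arc t₀ L) × Zhat => expS (p.2, thOf t₀ p.1.1)) := by
      apply continuous_iff_continuousAt.mpr
      intro p
      refine ContinuousAt.comp (x := p)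
        (f := fun p : ↥(Arc t₀ L) × Zhat => ((p.2 : Zhat), thOf t₀ (p.1.1 : ℂ)))
        continuous_expS.continuousAt ?_
      refine ContinuousAt.prodMk continuous_snd.continuousAt ?_
      exact ContinuousAt.comp (x := p) (f := fun p : ↥(Arc t₀ L) × Zhat => (p.1.1 : ℂ))
        (contAt_thOf (arc_subset_UU hL2 p.1.2))
        ((continuous_subtype_val.comp continuous_fst).continuousAt)
    apply Continuous.subtype_mk
    exact hraw

end St2

/-- `exp : ẑ × ℝ → S¹_ℚ` is a local homeomorphism, and
`π₁ : S¹_ℚ → S¹` is a fiber bundle with fiber homeomorphic to `ẑ`; in particular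
`π₁` admits local trivializations over every open arc of `S¹` of arclength `< 2π`. -/
theorem statement2 :
    IsLocalHomeomorph expS ∧
    (∀ w : ℂ, ‖w‖ = 1 → Nonempty ({x : SolQ // x.1 1 = w} ≃ₜ Zhat)) ∧
    (∀ t₀ L : ℝ, 0 < L → L < 2 * π →
      ∃ h : {x : SolQ // x.1 1 ∈
          {w : ℂ | ∃ θ : ℝ, |θ - t₀| < L / 2 ∧ w = Complex.exp ((θ : ℂ) * Complex.I)}} ≃ₜ
        ({w : ℂ | ∃ θ : ℝ, |θ - t₀| < L / 2 ∧ w = Complex.exp ((θ : ℂ) * Complex.I)} × Zhat),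
        ∀ x, ((h x).1 : ℂ) = x.1.1 1) := by
  refine ⟨?_, ?_, ?_⟩
  · intro p
    refine ⟨St2.mkPartial p.2 π Real.pi_pos (by linarith [Real.pi_pos]), ?_, rfl⟩
    show |p.2 - p.2| < π / 2
    simp
    positivity
  · intro w hw
    exact ⟨St2.fiberHomeo w hw⟩
  · intro t₀ L hL0 hL2
    exact ⟨St2.arcHomeo t₀ L hL0 hL2, fun x => rfl⟩

end
end

section
/- For every a ∈ ẑ, the leaf {φ(a)·ν(t) : t ∈ ℝ} is dense in S¹_ℚ; in particular the image of the baseleaf ν : ℝ → S¹_ℚ is dense. -/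
open Complex Real Filter MeasureTheory

noncomputable section

lemma leaf_dense (a : Zhat) : Dense (Set.range fun t : ℝ => phiS a * nuS t) := by
  rw [dense_iff_inter_open]
  rintro U hU ⟨x, hx⟩
  obtain ⟨V, hV, rfl⟩ := isOpen_induced_iff.mp hU
  obtain ⟨I, u, hu, hsub⟩ := isOpen_pi_iff.mp hV x.1 hx
  set N : ℕ+ := ∏ i ∈ I, i with hN
  -- choose t so that the N-th coordinate matches exactly
  set w : ℂ := x.1 N / phiComp a N with hw
  have hphi_ne : phiComp a N ≠ 0 := Complex.exp_ne_zero _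
  have hwabs : ‖w‖ = 1 := by
    have h1 : ‖x.1 N‖ = 1 := by
      have := x.2.1 N; exact this
    have h2 : ‖phiComp a N‖ = 1 := by
      have := exp_real_mul_I_norm (2 * π * ((a.1 N).val : ℕ) / ((N : ℕ+) : ℕ) : ℝ)
      exact this
    rw [hw, norm_div, h1, h2, div_one]
  have hexpw : Complex.exp ((w.arg : ℂ) * Complex.I) = w := by
    have := Complex.norm_mul_exp_arg_mul_I w
    rwa [hwabs, Complex.ofReal_one, one_mul] at this
  set t : ℝ := ((N : ℕ+) : ℕ) * w.arg with ht
  set y : SolQ := phiS a * nuS t with hy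
  have hNne : ((((N : ℕ+) : ℕ) : ℝ)) ≠ 0 := by exact_mod_cast N.ne_zero
  have hyN : y.1 N = x.1 N := by
    show phiComp a N * Complex.exp (((t / ((N : ℕ+) : ℕ) : ℝ) : ℂ) * Complex.I) = x.1 N
    have htN : (t / ((N : ℕ+) : ℕ) : ℝ) = w.arg := by
      rw [ht]; field_simp
    rw [htN, hexpw, hw, mul_div_cancel₀ _ hphi_ne]
  -- all coordinates at divisors of N agree
  have hdiv : ∀ i ∈ I, y.1 i = x.1 i := by
    intro i hi
    obtain ⟨k, hk⟩ := Finset.dvd_prod_of_mem id hi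
    have hk' : N = i * k := hk
    calc y.1 i = y.1 (i * k) ^ ((k : ℕ+) : ℕ) := (y.2.2 i k).symm
      _ = x.1 (i * k) ^ ((k : ℕ+) : ℕ) := by rw [← hk', hyN]
      _ = x.1 i := x.2.2 i k
  refine ⟨y, ?_, ⟨t, rfl⟩⟩
  apply hsub
  intro i hi
  rw [hdiv i hi]
  exact (hu i hi).2

lemma phiS_zero_mul (t : ℝ) : phiS (0 : Zhat) * nuS t = nuS t := by
  apply Subtype.ext
  funext n
  show phiComp 0 n * _ = _
  have h0 : ((0 : Zhat).1 n) = 0 := rfl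
  unfold phiComp
  haveI : NeZero (((n : ℕ+) : ℕ)) := ⟨n.ne_zero⟩
  rw [h0, ZMod.val_zero]
  simp

/-- For every `a ∈ ẑ`, the leaf `{φ(a)·ν(t) : t ∈ ℝ}` is dense in
`S¹_ℚ`; in particular the image of the baseleaf `ν : ℝ → S¹_ℚ` is dense. -/
theorem statement3 :
    (∀ a : Zhat, Dense (Set.range fun t : ℝ => phiS a * nuS t)) ∧
    Dense (Set.range nuS) := by
  refine ⟨leaf_dense, ?_⟩
  have := leaf_dense 0
  have heq : (fun t : ℝ => phiS (0 : Zhat) * nuS t) = nuS := funext phiS_zero_mul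
  rwa [heq] at this

end
end

section
/- If f : ℝ → ℂ is limit periodic, then the map ℤ → ℂ, n ↦ f(2πn), is uniformly continuous with respect to the profinite (divisibility) uniformity on ℤ — explicitly, for every ε > 0 there is a positive integer N such that N ∣ (n − m) implies |f(2πn) − f(2πm)| < ε — and consequently it extends uniquely to a continuous map ẑ → ℂ. -/
open Complex Real Filter MeasureTheory

noncomputable section

lemma keyCast (a : Zhat) (m M : ℕ+) (h : ((m : ℕ+) : ℕ) ∣ ((M : ℕ+) : ℕ)) :
    (((a.1 M).val : ℕ) : ZMod m) = a.1 m := by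
  obtain ⟨c, hc⟩ := h
  have hcpos : 0 < c := by
    rcases Nat.eq_zero_or_pos c with h0 | h0
    · exfalso; exact M.ne_zero (by rw [hc, h0, mul_zero])
    · exact h0
  set t : ℕ+ := ⟨c, hcpos⟩ with ht
  have hM : M = m * t := by
    apply PNat.coe_injective
    rw [PNat.mul_coe]
    exact hc
  subst hM
  haveI : NeZero ((m * t : ℕ+) : ℕ) := ⟨(m * t).ne_zero⟩
  have h2 := a.2 m t
  rw [ZMod.castHom_apply] at h2
  rw [ZMod.natCast_val]
  exact h2

lemma keyDvd (a : Zhat) (N M1 M2 : ℕ+) (h1 : ((N : ℕ+) : ℕ) ∣ ((M1 : ℕ+) : ℕ))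
    (h2 : ((N : ℕ+) : ℕ) ∣ ((M2 : ℕ+) : ℕ)) :
    (((N : ℕ+) : ℕ) : ℤ) ∣ ((a.1 M1).val : ℤ) - ((a.1 M2).val : ℤ) := by
  have e : (((a.1 M1).val : ℕ) : ZMod N) = (((a.1 M2).val : ℕ) : ZMod N) := by
    rw [keyCast a N M1 h1, keyCast a N M2 h2]
  rw [ZMod.natCast_eq_natCast_iff] at e
  exact dvd_sub_comm.mp e.dvd

/-- the level index `k!` -/
def idxF (k : ℕ) : ℕ+ := ⟨Nat.factorial k, Nat.factorial_pos k⟩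

lemma denseIota : DenseRange iotaZ := by
  intro a
  rw [_root_.mem_closure_iff]
  intro o ho hao
  obtain ⟨O, hO, rfl⟩ := isOpen_induced_iff.mp ho
  obtain ⟨I, u, hu, hsub⟩ := isOpen_pi_iff.mp hO a.1 hao
  set M : ℕ+ := ∏ i ∈ I, i with hMdef
  refine ⟨iotaZ ((a.1 M).val : ℤ), ?_, ⟨_, rfl⟩⟩
  show (iotaZ ((a.1 M).val : ℤ)).1 ∈ O
  apply hsub
  intro i hi
  have hdvd : ((i : ℕ+) : ℕ) ∣ ((M : ℕ+) : ℕ) := by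
    obtain ⟨c, hc⟩ := Finset.dvd_prod_of_mem (fun j => j) hi
    exact ⟨(c : ℕ), by rw [hMdef, hc, PNat.mul_coe]⟩
  have : (iotaZ ((a.1 M).val : ℤ)).1 i = a.1 i := by
    show ((((a.1 M).val : ℕ) : ℤ) : ZMod i) = a.1 i
    rw [Int.cast_natCast]
    exact keyCast a i M hdvd
  rw [this]
  exact (hu i hi).2

/-- If `f : ℝ → ℂ` is limit periodic, then `n ↦ f(2πn)` is
uniformly continuous with respect to the profinite (divisibility) uniformity on
`ℤ`, and consequently it extends uniquely to a continuous map `ẑ → ℂ`. -/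
theorem statement4 (f : ℝ → ℂ) (hf : LimitPeriodic f) :
    (∀ ε : ℝ, 0 < ε → ∃ N : ℕ+, ∀ n m : ℤ, ((N : ℕ+) : ℤ) ∣ (n - m) →
      ‖f (2 * π * n) - f (2 * π * m)‖ < ε) ∧
    (∃! g : Zhat → ℂ, Continuous g ∧ ∀ n : ℤ, g (iotaZ n) = f (2 * π * n)) := by
  have part1 : ∀ ε : ℝ, 0 < ε → ∃ N : ℕ+, ∀ n m : ℤ, ((N : ℕ+) : ℤ) ∣ (n - m) →
      ‖f (2 * π * n) - f (2 * π * m)‖ < ε := by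
    intro ε hε
    obtain ⟨N, hN⟩ := hf ε hε
    refine ⟨N, fun n m h => ?_⟩
    have := hN (2 * π * m) (n - m) h
    have e : (2 * π * (m : ℝ)) + 2 * π * ((n - m : ℤ) : ℝ) = 2 * π * (n : ℝ) := by
      push_cast; ring
    rwa [e] at this
  set seq : Zhat → ℕ → ℂ := fun a k => f (2 * π * (((a.1 (idxF k)).val : ℤ) : ℝ)) with hseq
  have hfactdvd : ∀ (N : ℕ+) (k : ℕ), (N : ℕ) ≤ k → ((N : ℕ+) : ℕ) ∣ ((idxF k : ℕ+) : ℕ) :=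
    fun N k hk => Nat.dvd_factorial N.pos hk
  have hcauchy : ∀ a : Zhat, CauchySeq (seq a) := by
    intro a
    rw [Metric.cauchySeq_iff]
    intro ε hε
    obtain ⟨N, hN⟩ := part1 ε hε
    refine ⟨(N : ℕ), fun j hj k hk => ?_⟩
    rw [dist_eq_norm]
    apply hN
    exact_mod_cast keyDvd a N (idxF j) (idxF k) (hfactdvd N j hj) (hfactdvd N k hk)
  set g : Zhat → ℂ := fun a => limUnder atTop (seq a) with hg
  have hg_tendsto : ∀ a : Zhat, Tendsto (seq a) atTop (nhds (g a)) :=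
    fun a => (hcauchy a).tendsto_limUnder
  have hvalue : ∀ n : ℤ, g (iotaZ n) = f (2 * π * n) := by
    intro n
    refine tendsto_nhds_unique (hg_tendsto (iotaZ n)) ?_
    rw [Metric.tendsto_atTop]
    intro ε hε
    obtain ⟨N, hN⟩ := part1 ε hε
    refine ⟨(N : ℕ), fun k hk => ?_⟩
    rw [dist_eq_norm]
    apply hN
    have hmod : ((((idxF k : ℕ+) : ℕ)) : ℤ) ∣ (((iotaZ n).1 (idxF k)).val : ℤ) - n := by
      rw [← ZMod.intCast_zmod_eq_zero_iff_dvd]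
      push_cast
      haveI : NeZero ((idxF k : ℕ+) : ℕ) := ⟨(idxF k).ne_zero⟩
      rw [sub_eq_zero]
      simp only [ZMod.natCast_val, ZMod.cast_id]
      rfl
    exact dvd_trans (by exact_mod_cast hfactdvd N k hk) hmod
  have hcont : Continuous g := by
    rw [continuous_iff_continuousAt]
    intro a
    unfold ContinuousAt
    rw [Metric.tendsto_nhds]
    intro ε hε
    obtain ⟨N, hN⟩ := part1 (ε / 2) (by linarith)
    have hUopen : IsOpen {b : Zhat | b.1 N = a.1 N} := by
      have : Continuous fun b : Zhat => b.1 N :=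
        (continuous_apply N).comp continuous_subtype_val
      exact this.isOpen_preimage {a.1 N} (isOpen_discrete _)
    filter_upwards [hUopen.mem_nhds rfl] with b hb
    rw [dist_eq_norm]
    have hbound : ‖g b - g a‖ ≤ ε / 2 := by
      refine le_of_tendsto ((hg_tendsto b).sub (hg_tendsto a)).norm ?_
      filter_upwards [Filter.eventually_ge_atTop (N : ℕ)] with k hk
      have hbN := keyCast b N (idxF k) (hfactdvd N k hk)
      have haN := keyCast a N (idxF k) (hfactdvd N k hk)
      have e : ((((b.1 (idxF k)).val : ℕ)) : ZMod N) = (((a.1 (idxF k)).val : ℕ) : ZMod N) := by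
        rw [hbN, haN, hb]
      rw [ZMod.natCast_eq_natCast_iff] at e
      have hd : (((N : ℕ+) : ℕ) : ℤ) ∣ ((b.1 (idxF k)).val : ℤ) - ((a.1 (idxF k)).val : ℤ) :=
        dvd_sub_comm.mp e.dvd
      exact le_of_lt (hN _ _ (by exact_mod_cast hd))
    calc ‖g b - g a‖ ≤ ε / 2 := hbound
      _ < ε := by linarith
  refine ⟨part1, g, ⟨hcont, hvalue⟩, ?_⟩
  rintro g' ⟨hg'c, hg'v⟩
  exact denseIota.equalizer hg'c hcont (funext fun n => (hg'v n).trans (hvalue n).symm)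


end
end

section
/- Let g : ℂ → ℂ. There exists a continuous function f : ℂ*_ℚ → ℂ with f ∘ ν = g if and only if g is continuous and limit periodic with respect to x. Moreover, such f can be chosen leafwise holomorphic (i.e., f ∘ exp(a, ·) : ℂ → ℂ is holomorphic for every a ∈ ẑ) if and only if g is in addition holomorphic on ℂ. -/
open Complex Real Filter MeasureTheory

noncomputable section

namespace S9

instance (n : ℕ) : DiscreteTopology (ZMod n) := ⟨rfl⟩
instance (n : ℕ+) : NeZero ((n : ℕ+) : ℕ) := ⟨n.ne_zero⟩

lemma two_pi_I_ne_zero' : (2 * (π : ℂ) * Complex.I) ≠ 0 := by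
  simp [Real.pi_ne_zero, Complex.I_ne_zero, Complex.ofReal_ne_zero]

lemma ncastC_ne (n : ℕ+) : (((n : ℕ+) : ℕ) : ℂ) ≠ 0 := by exact_mod_cast n.ne_zero

/-- `e^{2πim/n}` for `m : ℤ`. -/
def expnz (n : ℕ+) (m : ℤ) : ℂ :=
  Complex.exp (2 * (π : ℂ) * (m : ℂ) / (((n : ℕ+) : ℕ) : ℂ) * Complex.I)

lemma expnz_add (n : ℕ+) (A B : ℤ) : expnz n (A + B) = expnz n A * expnz n B := by
  rw [expnz, expnz, expnz, ← Complex.exp_add]; congr 1; push_cast; ring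

lemma expnz_nmul (n : ℕ+) (t : ℤ) : expnz n (((n : ℕ+) : ℕ) * t) = 1 := by
  have hn := ncastC_ne n
  have h : 2 * (π : ℂ) * ((((n : ℕ+) : ℕ) * t : ℤ) : ℂ) / (((n : ℕ+) : ℕ) : ℂ) * Complex.I
      = (t : ℂ) * (2 * (π : ℂ) * Complex.I) := by
    push_cast; field_simp
  rw [expnz, h, Complex.exp_int_mul_two_pi_mul_I]

lemma expnz_inj (n : ℕ+) (A B : ℤ) :
    expnz n A = expnz n B ↔ ((A : ZMod ((n : ℕ+) : ℕ)) = (B : ZMod ((n : ℕ+) : ℕ))) := by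
  constructor
  · intro h
    rw [expnz, expnz, Complex.exp_eq_exp_iff_exists_int] at h
    obtain ⟨t, ht⟩ := h
    have hn := ncastC_ne n
    have hπ : (π : ℂ) ≠ 0 := by exact_mod_cast Real.pi_ne_zero
    field_simp at ht
    have h3 : (A : ℂ) * (2 * (π : ℂ) * Complex.I)
        = ((B : ℂ) + (((n : ℕ+) : ℕ) : ℂ) * (t : ℂ)) * (2 * (π : ℂ) * Complex.I) := by
      linear_combination (2 * (π : ℂ) * Complex.I) * ht
    have h4 : (A : ℂ) = (B : ℂ) + (((n : ℕ+) : ℕ) : ℂ) * (t : ℂ) :=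
      mul_right_cancel₀ two_pi_I_ne_zero' h3
    have h5 : A = B + (((n : ℕ+) : ℕ) : ℤ) * t := by exact_mod_cast h4
    rw [ZMod.intCast_eq_intCast_iff]
    have hd : (((n : ℕ+) : ℕ) : ℤ) ∣ B - A := ⟨-t, by rw [h5]; ring⟩
    exact Int.modEq_iff_dvd.mpr hd
  · intro h
    have h1 : (((n : ℕ+) : ℕ) : ℤ) ∣ B - A :=
      Int.ModEq.dvd ((ZMod.intCast_eq_intCast_iff _ _ _).mp h)
    obtain ⟨t, ht⟩ := h1
    have hB : B = A + ((n : ℕ+) : ℕ) * t := by omega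
    rw [hB, expnz_add, expnz_nmul, mul_one]

lemma valz (n : ℕ+) (x : ZMod ((n : ℕ+) : ℕ)) :
    (((x.val : ℤ)) : ZMod ((n : ℕ+) : ℕ)) = x := by
  push_cast
  rw [ZMod.natCast_val, ZMod.cast_id]

lemma expnz_congr (n : ℕ+) {A B : ℤ}
    (h : (A : ZMod ((n : ℕ+) : ℕ)) = (B : ZMod ((n : ℕ+) : ℕ))) :
    expnz n A = expnz n B := (expnz_inj n A B).mpr h

lemma phiComp_eq (a : Zhat) (n : ℕ+) : phiComp a n = expnz n (((a.1 n).val : ℤ)) := by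
  rw [phiComp, expnz]; congr 1; push_cast; ring

lemma expnz_pow (n k : ℕ+) (m : ℤ) :
    expnz (n * k) m ^ ((k : ℕ+) : ℕ) = expnz n m := by
  rw [expnz, expnz, ← Complex.exp_nat_mul]
  congr 1
  have hn := ncastC_ne n
  have hk := ncastC_ne k
  rw [PNat.mul_coe]
  push_cast
  field_simp

lemma Zhat_cast_compat (a : Zhat) {n m : ℕ+} (h : ((n : ℕ+) : ℕ) ∣ ((m : ℕ+) : ℕ)) :
    (((a.1 m).val : ℤ) : ZMod ((n : ℕ+) : ℕ)) = a.1 n := by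
  obtain ⟨c, hc⟩ := h
  have hc0 : 0 < c := Nat.pos_of_ne_zero (by rintro rfl; rw [mul_zero] at hc; exact m.ne_zero hc)
  obtain ⟨k, rfl⟩ : ∃ k : ℕ+, m = n * k :=
    ⟨Nat.toPNat c hc0, PNat.coe_injective (by rw [PNat.mul_coe]; exact hc)⟩
  rw [Int.cast_natCast]
  rw [ZMod.natCast_val,
    ← ZMod.castHom_apply (h := show ((n : ℕ+) : ℕ) ∣ (((n * k) : ℕ+) : ℕ) by
        rw [PNat.mul_coe]; exact dvd_mul_right _ _)]
  exact a.2 n k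

end S9
namespace S9

lemma CSolQ_mul_comp (x y : CSolQ) (n : ℕ+) : (x * y).1 n = x.1 n * y.1 n := rfl

lemma CSolQ_ext {x y : CSolQ} (h : ∀ n, x.1 n = y.1 n) : x = y := Subtype.ext (funext h)

lemma expC_comp (a : Zhat) (z : ℂ) (n : ℕ+) :
    (expC a z).1 n = expnz n (((a.1 n).val : ℤ)) *
      Complex.exp (Complex.I * z / (((n : ℕ+) : ℕ) : ℂ)) := by
  show phiComp a n * _ = _
  rw [phiComp_eq]; rfl

lemma nuC_comp (z : ℂ) (n : ℕ+) :
    (nuC z).1 n = Complex.exp (Complex.I * z / (((n : ℕ+) : ℕ) : ℂ)) := rfl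

lemma expC_zero (z : ℂ) : expC 0 z = nuC z := by
  apply CSolQ_ext
  intro n
  rw [expC_comp, nuC_comp]
  have h0 : ((0 : Zhat).1 n) = 0 := rfl
  rw [h0, ZMod.val_zero]
  simp [expnz]

/-- `exp(I(z+2πk)/n) = e^{2πik/n} · exp(Iz/n)`. -/
lemma exp_shift (z : ℂ) (k : ℤ) (n : ℕ+) :
    Complex.exp (Complex.I * (z + 2 * (π : ℂ) * (k : ℂ)) / (((n : ℕ+) : ℕ) : ℂ))
      = expnz n k * Complex.exp (Complex.I * z / (((n : ℕ+) : ℕ) : ℂ)) := by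
  rw [expnz, ← Complex.exp_add]
  congr 1
  have hn := ncastC_ne n
  field_simp
  ring

/-- shifting the leaf coordinate by `2πk` amounts to translating by `ι k`. -/
lemma expC_shift (a : Zhat) (z : ℂ) (k : ℤ) :
    expC a (z + 2 * (π : ℂ) * (k : ℂ)) = expC (a + iotaZ k) z := by
  apply CSolQ_ext
  intro n
  rw [expC_comp, expC_comp, exp_shift]
  have hval : ((((a + iotaZ k).1 n).val : ℤ) : ZMod ((n : ℕ+) : ℕ))
      = (((((a.1 n).val : ℤ)) + k : ℤ) : ZMod ((n : ℕ+) : ℕ)) := by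
    have h1 : (a + iotaZ k).1 n = a.1 n + (k : ZMod ((n : ℕ+) : ℕ)) := rfl
    rw [valz, h1]
    push_cast
    rw [ZMod.natCast_val, ZMod.cast_id]
  rw [expnz_congr n hval, expnz_add]
  ring

lemma nuC_shift (z : ℂ) (k : ℤ) :
    nuC (z + 2 * (π : ℂ) * (k : ℂ)) = expC (iotaZ k) z := by
  rw [← expC_zero (z + 2 * (π : ℂ) * (k : ℂ)), expC_shift]
  congr 1
  apply Subtype.ext
  funext n
  show (0 : ZMod _) + _ = _
  rw [zero_add]

lemma iotaZ_add (k l : ℤ) : iotaZ (k + l) = iotaZ k + iotaZ l := by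
  apply Subtype.ext; funext n
  show ((k + l : ℤ) : ZMod ((n : ℕ+) : ℕ)) = (k : ZMod ((n : ℕ+) : ℕ)) + (l : ZMod ((n : ℕ+) : ℕ))
  push_cast
  rfl

/-- factorials as positive naturals -/
def fac (j : ℕ) : ℕ+ := ⟨(j + 1).factorial, (j + 1).factorial_pos⟩

lemma fac_dvd {j j' : ℕ} (h : j ≤ j') : ((fac j : ℕ+) : ℕ) ∣ ((fac j' : ℕ+) : ℕ) :=
  Nat.factorial_dvd_factorial (by omega)

lemma dvd_fac {N j : ℕ} (hN : 0 < N) (h : N ≤ j + 1) : N ∣ ((fac j : ℕ+) : ℕ) :=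
  Nat.dvd_factorial hN h

/-- the approximating sequence: `g(z + 2π·(a mod (j+1)!))`. -/
def seqG (g : ℂ → ℂ) (a : Zhat) (z : ℂ) (j : ℕ) : ℂ :=
  g (z + ((2 * π * ((a.1 (fac j)).val : ℝ) : ℝ) : ℂ))

/-- the leafwise extension of `g`. -/
def Flim (g : ℂ → ℂ) (a : Zhat) (z : ℂ) : ℂ := limUnder atTop (seqG g a z)

lemma seq_shift (a : Zhat) (z : ℂ) {j j' : ℕ} (h : j ≤ j') :
    ∃ d : ℤ, (((fac j : ℕ+) : ℕ) : ℤ) ∣ d ∧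
      z + ((2 * π * ((a.1 (fac j')).val : ℝ) : ℝ) : ℂ)
        = (z + ((2 * π * ((a.1 (fac j)).val : ℝ) : ℝ) : ℂ)) + 2 * (π : ℂ) * (d : ℂ) := by
  refine ⟨((a.1 (fac j')).val : ℤ) - ((a.1 (fac j)).val : ℤ), ?_, ?_⟩
  · rw [← ZMod.intCast_zmod_eq_zero_iff_dvd, Int.cast_sub, sub_eq_zero,
      Zhat_cast_compat a (fac_dvd h), valz]
  · push_cast
    ring

lemma im_aux (z : ℂ) (r : ℝ) : (z + (r : ℂ)).im = z.im := by simp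

/-- Main quantitative estimate: uniform Cauchyness of `seqG` over strips. -/
lemma key_est {g : ℂ → ℂ} (hg : LimitPeriodicX g) {ε : ℝ} (hε : 0 < ε)
    {K : Set ℝ} (hK : IsCompact K) :
    ∃ N : ℕ, ∀ a : Zhat, ∀ z : ℂ, z.im ∈ K → ∀ j j' : ℕ, N ≤ j → j ≤ j' →
      ‖seqG g a z j' - seqG g a z j‖ < ε := by
  obtain ⟨N₀, hN₀⟩ := hg ε hε K hK
  refine ⟨(N₀ : ℕ), fun a z hz j j' hj hjj => ?_⟩
  obtain ⟨d, hd, harg⟩ := seq_shift a z hjj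
  have hdvd : ((N₀ : ℕ+) : ℤ) ∣ d :=
    dvd_trans (Int.natCast_dvd_natCast.mpr (dvd_fac N₀.pos (by omega))) hd
  have him : (z + ((2 * π * ((a.1 (fac j)).val : ℝ) : ℝ) : ℂ)).im ∈ K := by
    rw [im_aux]; exact hz
  have := hN₀ _ him d hdvd
  rw [seqG, seqG, harg]
  exact this

lemma tendsto_seqG {g : ℂ → ℂ} (hg : LimitPeriodicX g) (a : Zhat) (z : ℂ) :
    Tendsto (seqG g a z) atTop (nhds (Flim g a z)) := by
  have hc : CauchySeq (seqG g a z) := by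
    rw [Metric.cauchySeq_iff']
    intro ε hε
    obtain ⟨N, hN⟩ := key_est hg hε (isCompact_singleton : IsCompact {z.im})
    exact ⟨N, fun n hn => by
      rw [dist_eq_norm]; exact hN a z rfl N n le_rfl hn⟩
  obtain ⟨w, hw⟩ := cauchySeq_tendsto_of_complete hc
  unfold Flim
  rwa [hw.limUnder_eq]

lemma tail_est {g : ℂ → ℂ} (hg : LimitPeriodicX g) {ε : ℝ} (hε : 0 < ε)
    {K : Set ℝ} (hK : IsCompact K) :
    ∃ N : ℕ, ∀ a : Zhat, ∀ z : ℂ, z.im ∈ K → ∀ j : ℕ, N ≤ j →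
      ‖Flim g a z - seqG g a z j‖ ≤ ε := by
  obtain ⟨N, hN⟩ := key_est hg hε hK
  refine ⟨N, fun a z hz j hj => ?_⟩
  have ht : Tendsto (fun j' => seqG g a z j' - seqG g a z j) atTop
      (nhds (Flim g a z - seqG g a z j)) := (tendsto_seqG hg a z).sub tendsto_const_nhds
  apply le_of_tendsto ht.norm
  filter_upwards [eventually_ge_atTop j] with j' hj'
  exact (hN a z hz j j' hj hj').le

end S9
namespace S9

lemma cont_coord (n : ℕ+) : Continuous (fun x : CSolQ => x.1 n) :=
  (continuous_apply n).comp continuous_subtype_val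

lemma cont_zcoord (n : ℕ+) : Continuous (fun a : Zhat => a.1 n) :=
  (continuous_apply n).comp continuous_subtype_val

lemma cont_seqG_pair {g : ℂ → ℂ} (hgc : Continuous g) (j : ℕ) :
    Continuous (fun p : Zhat × ℂ => seqG g p.1 p.2 j) := by
  apply hgc.comp
  apply Continuous.add continuous_snd
  have h0 : Continuous (fun x : ZMod ((fac j : ℕ+) : ℕ) => ((2 * π * (x.val : ℝ) : ℝ) : ℂ)) :=
    continuous_of_discreteTopology
  exact (h0.comp ((cont_zcoord (fac j)).comp continuous_fst))

lemma tlu {g : ℂ → ℂ} (hg : LimitPeriodicX g) :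
    TendstoLocallyUniformly (fun j (p : Zhat × ℂ) => seqG g p.1 p.2 j)
      (fun p => Flim g p.1 p.2) atTop := by
  intro u hu x
  rw [Metric.mem_uniformity_dist] at hu
  obtain ⟨ε, hε, hu⟩ := hu
  obtain ⟨N, hN⟩ := tail_est hg (half_pos hε) (isCompact_closedBall x.2.im 1)
  refine ⟨(fun p : Zhat × ℂ => p.2.im) ⁻¹' Metric.ball x.2.im 1, ?_, ?_⟩
  · exact IsOpen.mem_nhds
      (Metric.isOpen_ball.preimage (Complex.continuous_im.comp continuous_snd))
      (by simp [Metric.mem_ball, hε])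
  · filter_upwards [eventually_ge_atTop N] with j hj
    intro y hy
    apply hu
    rw [dist_eq_norm]
    exact lt_of_le_of_lt
      (hN y.1 y.2 (Metric.ball_subset_closedBall hy) j hj) (half_lt_self hε)

lemma cont_Flim {g : ℂ → ℂ} (hgc : Continuous g) (hg : LimitPeriodicX g) :
    Continuous (fun p : Zhat × ℂ => Flim g p.1 p.2) :=
  (tlu hg).continuous (Filter.Eventually.of_forall (cont_seqG_pair hgc)).frequently

lemma tluA {g : ℂ → ℂ} (hg : LimitPeriodicX g) (a : Zhat) :
    TendstoLocallyUniformly (fun j (z : ℂ) => seqG g a z j) (fun z => Flim g a z) atTop := by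
  intro u hu x
  rw [Metric.mem_uniformity_dist] at hu
  obtain ⟨ε, hε, hu⟩ := hu
  obtain ⟨N, hN⟩ := tail_est hg (half_pos hε) (isCompact_closedBall x.im 1)
  refine ⟨(fun z : ℂ => z.im) ⁻¹' Metric.ball x.im 1, ?_, ?_⟩
  · exact IsOpen.mem_nhds (Metric.isOpen_ball.preimage Complex.continuous_im)
      (by simp [Metric.mem_ball, hε])
  · filter_upwards [eventually_ge_atTop N] with j hj
    intro y hy
    apply hu
    rw [dist_eq_norm]
    exact lt_of_le_of_lt
      (hN a y (Metric.ball_subset_closedBall hy) j hj) (half_lt_self hε)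

lemma diff_Flim {g : ℂ → ℂ} (hg : LimitPeriodicX g) (hgd : Differentiable ℂ g) (a : Zhat) :
    Differentiable ℂ (fun z => Flim g a z) := by
  rw [← differentiableOn_univ]
  refine TendstoLocallyUniformlyOn.differentiableOn
    ((tluA hg a).tendstoLocallyUniformlyOn) ?_ isOpen_univ
  apply Filter.Eventually.of_forall
  intro j
  exact (hgd.comp ((differentiable_id).add_const _)).differentiableOn

/-- Every point of `ℂ*_ℚ` with prescribed first-coordinate logarithm lies on a leaf. -/
lemma exists_a (x : CSolQ) (z : ℂ) (hz : Complex.exp (Complex.I * z) = x.1 1) :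
    ∃ a : Zhat, expC a z = x := by
  have hroot : ∀ n : ℕ+, ∃ m : ℕ, x.1 n = expnz n (m : ℤ) *
      Complex.exp (Complex.I * z / (((n : ℕ+) : ℕ) : ℂ)) := by
    intro n
    haveI : NeZero ((n : ℕ+) : ℕ) := ⟨n.ne_zero⟩
    set w := Complex.exp (Complex.I * z / (((n : ℕ+) : ℕ) : ℂ)) with hw
    have hwn : w ^ ((n : ℕ+) : ℕ) = Complex.exp (Complex.I * z) := by
      rw [hw]
      have := exp_div_powC (Complex.I * z) 1 n
      simpa using this
    have hxn : (x.1 n) ^ ((n : ℕ+) : ℕ) = x.1 1 := by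
      have := x.2.2 1 n
      simpa using this
    set ζ := x.1 n * w⁻¹ with hζ
    have hwne : w ≠ 0 := Complex.exp_ne_zero _
    have hζn : ζ ^ ((n : ℕ+) : ℕ) = 1 := by
      rw [hζ, mul_pow, inv_pow, hxn, hwn, hz]
      exact mul_inv_cancel₀ (x.2.1 1)
    obtain ⟨i, hi, hpow⟩ := IsPrimitiveRoot.eq_pow_of_pow_eq_one
      (Complex.isPrimitiveRoot_exp ((n : ℕ+) : ℕ) n.ne_zero) hζn
    refine ⟨i, ?_⟩
    have hev : expnz n (i : ℤ) = ζ := by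
      rw [← hpow, expnz, ← Complex.exp_nat_mul]
      congr 1
      push_cast
      ring
    rw [hev, hζ]
    field_simp
  choose c hc using hroot
  have hcompat : ∀ (n k : ℕ+),
      ZMod.castHom (show ((n : ℕ+) : ℕ) ∣ ((n * k : ℕ+) : ℕ) by
          rw [PNat.mul_coe]; exact dvd_mul_right _ _) (ZMod ((n : ℕ+) : ℕ))
        ((c (n * k) : ZMod ((n * k : ℕ+) : ℕ))) = (c n : ZMod ((n : ℕ+) : ℕ)) := by
    intro n k
    have h1 : x.1 n = expnz n (c (n * k) : ℤ) *
        Complex.exp (Complex.I * z / (((n : ℕ+) : ℕ) : ℂ)) := by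
      rw [← x.2.2 n k, hc (n * k), mul_pow, expnz_pow, exp_div_powC]
    have hwne : Complex.exp (Complex.I * z / (((n : ℕ+) : ℕ) : ℂ)) ≠ 0 :=
      Complex.exp_ne_zero _
    have h3 : expnz n (c (n * k) : ℤ) = expnz n (c n : ℤ) :=
      mul_right_cancel₀ hwne (by rw [← h1, ← hc n])
    have h4 := (expnz_inj n _ _).mp h3
    rw [map_natCast]
    exact_mod_cast h4
  refine ⟨⟨fun n => (c n : ZMod ((n : ℕ+) : ℕ)), hcompat⟩, ?_⟩
  apply CSolQ_ext
  intro n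
  erw [expC_comp]; rw [hc n]
  have ha : ((⟨fun n => (c n : ZMod ((n : ℕ+) : ℕ)), hcompat⟩ : Zhat)).1 n
      = (c n : ZMod ((n : ℕ+) : ℕ)) := rfl
  rw [ha]
  have hcongr : expnz n ((((c n : ZMod ((n : ℕ+) : ℕ))).val : ℤ)) = expnz n (c n : ℤ) := by
    apply expnz_congr
    rw [valz]
    push_cast
    rfl
  rw [hcongr]

def zOf (x : CSolQ) : ℂ := -Complex.I * Complex.log (x.1 1)

lemma exp_I_zOf (x : CSolQ) : Complex.exp (Complex.I * zOf x) = x.1 1 := by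
  rw [zOf]
  have : Complex.I * (-Complex.I * Complex.log (x.1 1)) = Complex.log (x.1 1) := by
    have := Complex.I_mul_I
    ring_nf
    rw [Complex.I_sq]
    ring
  rw [this, Complex.exp_log (x.2.1 1)]

def aOf (x : CSolQ) : Zhat := (exists_a x (zOf x) (exp_I_zOf x)).choose

lemma expC_aOf (x : CSolQ) : expC (aOf x) (zOf x) = x :=
  (exists_a x (zOf x) (exp_I_zOf x)).choose_spec

/-- Structure of coincidences between leaf coordinates. -/
lemma expC_eq_structure {a b : Zhat} {z w : ℂ} (h : expC a z = expC b w) :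
    ∃ k : ℤ, w = z + 2 * (π : ℂ) * (k : ℂ) ∧ b = a + iotaZ (-k) := by
  have h1 : Complex.exp (Complex.I * z) = Complex.exp (Complex.I * w) := by
    have hc := congrArg (fun y : CSolQ => y.1 1) h
    simp only [expC_comp] at hc
    haveI : NeZero ((1 : ℕ+) : ℕ) := ⟨one_ne_zero⟩
    have he1 : ∀ m : ℤ, expnz 1 m = 1 := by
      intro m
      rw [expnz]
      have harg : 2 * (π : ℂ) * (m : ℂ) / (((1 : ℕ+) : ℕ) : ℂ) * Complex.I
          = (m : ℂ) * (2 * (π : ℂ) * Complex.I) := by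
        rw [PNat.one_coe]
        push_cast
        ring
      rw [harg, Complex.exp_int_mul_two_pi_mul_I]
    rw [he1, he1, one_mul, one_mul] at hc
    simpa using hc
  rw [Complex.exp_eq_exp_iff_exists_int] at h1
  obtain ⟨t, ht⟩ := h1
  have hw : w = z + 2 * (π : ℂ) * ((-t : ℤ) : ℂ) := by
    have hI := Complex.I_ne_zero
    have : Complex.I * w = Complex.I * (z + 2 * (π : ℂ) * ((-t : ℤ) : ℂ)) := by
      push_cast
      push_cast at ht
      linear_combination -ht
    exact mul_left_cancel₀ hI this
  refine ⟨-t, hw, ?_⟩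
  rw [neg_neg]
  have hz' : z = w + 2 * (π : ℂ) * (t : ℂ) := by
    rw [hw]; push_cast; ring
  have h2 : expC b w = expC (a + iotaZ t) w := by
    rw [← expC_shift, ← hz']
    exact h.symm
  -- deduce b = a + iotaZ (-t) from injectivity in the `a` variable
  apply Subtype.ext
  funext n
  have hc := congrArg (fun y : CSolQ => y.1 n) h2
  simp only [expC_comp] at hc
  have hexp : expnz n (((b.1 n).val : ℤ)) = expnz n ((((a + iotaZ t).1 n).val : ℤ)) := by
    have hwne : Complex.exp (Complex.I * w / (((n : ℕ+) : ℕ) : ℂ)) ≠ 0 :=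
      Complex.exp_ne_zero _
    exact mul_right_cancel₀ hwne hc
  have h4 := (expnz_inj n _ _).mp hexp
  rw [valz, valz] at h4
  exact h4

end S9
namespace S9

/-- Invariance of `Flim` under deck transformations. -/
lemma Flim_shift {g : ℂ → ℂ} (hg : LimitPeriodicX g) (a : Zhat) (z : ℂ) (k : ℤ) :
    Flim g (a + iotaZ (-k)) (z + 2 * (π : ℂ) * (k : ℂ)) = Flim g a z := by
  set b := a + iotaZ (-k) with hb
  set w := z + 2 * (π : ℂ) * (k : ℂ) with hwdef
  have hdiff : Tendsto (fun j => seqG g b w j - seqG g a z j) atTop (nhds 0) := by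
    rw [NormedAddCommGroup.tendsto_nhds_zero]
    intro ε hε
    obtain ⟨N₀, hN₀⟩ := hg ε hε {z.im} isCompact_singleton
    filter_upwards [eventually_ge_atTop ((N₀ : ℕ))] with j hj
    have hdvd : (((fac j : ℕ+) : ℕ) : ℤ) ∣
        (k + ((b.1 (fac j)).val : ℤ) - ((a.1 (fac j)).val : ℤ)) := by
      rw [← ZMod.intCast_zmod_eq_zero_iff_dvd]
      push_cast
      have h1 : ((((b.1 (fac j)).val : ℤ)) : ZMod ((fac j : ℕ+) : ℕ)) = b.1 (fac j) := valz _ _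
      have h2 : ((((a.1 (fac j)).val : ℤ)) : ZMod ((fac j : ℕ+) : ℕ)) = a.1 (fac j) := valz _ _
      have h3 : b.1 (fac j) = a.1 (fac j) + ((-k : ℤ) : ZMod ((fac j : ℕ+) : ℕ)) := rfl
      push_cast at h1 h2 h3
      rw [h1, h2, h3]
      push_cast
      ring
    have hdvd' : ((N₀ : ℕ+) : ℤ) ∣ (k + ((b.1 (fac j)).val : ℤ) - ((a.1 (fac j)).val : ℤ)) :=
      dvd_trans (Int.natCast_dvd_natCast.mpr (dvd_fac N₀.pos (by omega))) hdvd
    have him : (z + ((2 * π * (((a.1 (fac j)).val : ℕ) : ℝ) : ℝ) : ℂ)).im ∈ ({z.im} : Set ℝ) := by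
      rw [im_aux]; rfl
    have hkey := hN₀ _ him _ hdvd'
    have harg : w + ((2 * π * (((b.1 (fac j)).val : ℕ) : ℝ) : ℝ) : ℂ)
        = (z + ((2 * π * (((a.1 (fac j)).val : ℕ) : ℝ) : ℝ) : ℂ))
          + 2 * (π : ℂ) * (((k + ((b.1 (fac j)).val : ℤ) - ((a.1 (fac j)).val : ℤ)) : ℤ) : ℂ) := by
      rw [hwdef]
      push_cast
      ring
    rw [seqG, seqG, harg]
    exact hkey
  have h1 := tendsto_seqG hg a z
  have h2 := tendsto_seqG hg b w
  have h3 : Tendsto (fun j => seqG g b w j - seqG g a z j) atTop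
      (nhds (Flim g b w - Flim g a z)) := h2.sub h1
  have h4 := tendsto_nhds_unique h3 hdiff
  exact sub_eq_zero.mp h4

lemma Flim_welldef {g : ℂ → ℂ} (hg : LimitPeriodicX g) {a b : Zhat} {z w : ℂ}
    (h : expC a z = expC b w) : Flim g b w = Flim g a z := by
  obtain ⟨k, hw, hb⟩ := expC_eq_structure h
  rw [hw, hb]
  exact Flim_shift hg a z k

/-- THE extension `f : ℂ*_ℚ → ℂ` of `g`. -/
def fF (g : ℂ → ℂ) : CSolQ → ℂ := fun x => Flim g (aOf x) (zOf x)

lemma fF_expC {g : ℂ → ℂ} (hg : LimitPeriodicX g) (a : Zhat) (z : ℂ) :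
    fF g (expC a z) = Flim g a z := by
  apply Flim_welldef hg
  rw [expC_aOf]

lemma Flim_zero (g : ℂ → ℂ) (z : ℂ) : Flim g 0 z = g z := by
  have hs : seqG g 0 z = fun _ => g z := by
    funext j
    rw [seqG]
    have h0 : ((0 : Zhat).1 (fac j)) = 0 := rfl
    rw [h0, ZMod.val_zero]
    norm_num
  rw [Flim, hs]
  exact Filter.Tendsto.limUnder_eq tendsto_const_nhds

lemma fF_nuC {g : ℂ → ℂ} (hg : LimitPeriodicX g) (z : ℂ) : fF g (nuC z) = g z := by
  rw [← expC_zero, fF_expC hg, Flim_zero]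

end S9
namespace S9

instance : FirstCountableTopology CSolQ :=
  Topology.IsInducing.firstCountableTopology
    (Topology.IsEmbedding.subtypeVal (X := ℕ+ → ℂ)).toIsInducing

instance : FirstCountableTopology Zhat :=
  Topology.IsInducing.firstCountableTopology
    (Topology.IsEmbedding.subtypeVal (X := (n : ℕ+) → ZMod ((n : ℕ+) : ℕ))).toIsInducing

instance : SequentialSpace CSolQ := inferInstance

lemma Zhat_isEmbedding : Topology.IsEmbedding (Subtype.val : Zhat → ((n : ℕ+) → ZMod n)) :=
  Topology.IsEmbedding.subtypeVal

lemma tendsto_Zhat_iff {ι : Type*} {l : Filter ι} {u : ι → Zhat} {a : Zhat} :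
    Tendsto u l (nhds a) ↔ ∀ n : ℕ+, ∀ᶠ j in l, (u j).1 n = a.1 n := by
  refine Zhat_isEmbedding.tendsto_nhds_iff.trans ?_
  refine tendsto_pi_nhds.trans ?_
  apply forall_congr'
  intro n
  rw [show nhds ((a.1 : (n : ℕ+) → ZMod n) n) = pure (a.1 n) by rw [nhds_discrete]]
  exact Filter.tendsto_pure

lemma eventually_eq_of_tendsto_expnz {ι : Type*} {l : Filter ι} {n : ℕ+}
    {u : ι → ZMod ((n : ℕ+) : ℕ)} {c : ZMod ((n : ℕ+) : ℕ)}
    (h : Tendsto (fun j => expnz n (((u j).val : ℤ))) l (nhds (expnz n ((c.val : ℤ))))) :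
    ∀ᶠ j in l, u j = c := by
  classical
  set S : Set ℂ := (fun d : ZMod ((n : ℕ+) : ℕ) => expnz n ((d.val : ℤ))) '' {d | d ≠ c} with hS
  have hfin : S.Finite := Set.Finite.image _ (Set.toFinite _)
  have hne : expnz n ((c.val : ℤ)) ∉ S := by
    rintro ⟨d, hd, hde⟩
    apply hd
    have := (expnz_inj n _ _).mp hde
    rwa [valz, valz] at this
  have hopen : IsOpen Sᶜ := hfin.isClosed.isOpen_compl
  filter_upwards [h.eventually_mem (hopen.mem_nhds hne)] with j hj
  by_contra hne2
  exact hj ⟨u j, hne2, rfl⟩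

set_option maxHeartbeats 1000000 in
lemma cont_fF {g : ℂ → ℂ} (hgc : Continuous g) (hg : LimitPeriodicX g) :
    Continuous (fF g) := by
  rw [continuous_iff_seqContinuous]
  intro x p hx
  have hcoord : ∀ n : ℕ+, Tendsto (fun j => (x j).1 n) atTop (nhds (p.1 n)) :=
    fun n => ((cont_coord n).tendsto p).comp hx
  set z0 := zOf p with hz0
  set a0 := aOf p with ha0
  set zseq : ℕ → ℂ := fun j => z0 + (-Complex.I) * Complex.log ((x j).1 1 / p.1 1) with hzseq
  have hrat : Tendsto (fun j => (x j).1 1 / p.1 1) atTop (nhds 1) := by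
    have h1 := (hcoord 1).div_const (p.1 1)
    rwa [div_self (p.2.1 1)] at h1
  have hlog : Tendsto (fun j => Complex.log ((x j).1 1 / p.1 1)) atTop (nhds 0) := by
    have := hrat.clog Complex.one_mem_slitPlane
    rwa [Complex.log_one] at this
  have hzt : Tendsto zseq atTop (nhds z0) := by
    have h2 : Tendsto zseq atTop (nhds (z0 + (-Complex.I) * 0)) :=
      tendsto_const_nhds.add (tendsto_const_nhds.mul hlog)
    simpa using h2
  have hzexp : ∀ j, Complex.exp (Complex.I * zseq j) = (x j).1 1 := by
    intro j
    have hrne : (x j).1 1 / p.1 1 ≠ 0 := div_ne_zero ((x j).2.1 1) (p.2.1 1)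
    have harg : Complex.I * zseq j
        = Complex.I * z0 + Complex.log ((x j).1 1 / p.1 1) := by
      rw [hzseq]
      have hII := Complex.I_mul_I
      ring_nf
      rw [Complex.I_sq]
      ring
    rw [harg, Complex.exp_add, exp_I_zOf, Complex.exp_log hrne]
    rw [mul_div_assoc']
    exact mul_div_cancel_left₀ _ (p.2.1 1)
  have haseq := fun j => exists_a (x j) (zseq j) (hzexp j)
  choose aseq haseq using haseq
  have hfa : ∀ j, fF g (x j) = Flim g (aseq j) (zseq j) := by
    intro j
    apply Flim_welldef hg
    rw [haseq j, expC_aOf]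
  have hat : Tendsto aseq atTop (nhds a0) := by
    rw [tendsto_Zhat_iff]
    intro n
    have hexpne : ∀ w : ℂ, Complex.exp (Complex.I * w / (((n : ℕ+) : ℕ) : ℂ)) ≠ 0 :=
      fun w => Complex.exp_ne_zero _
    have hcompj : ∀ j, expnz n ((((aseq j).1 n).val : ℤ))
        = (x j).1 n / Complex.exp (Complex.I * zseq j / (((n : ℕ+) : ℕ) : ℂ)) := by
      intro j
      rw [eq_div_iff (hexpne _)]
      rw [← expC_comp, haseq j]
    have hcompp : expnz n (((a0.1 n).val : ℤ))
        = p.1 n / Complex.exp (Complex.I * z0 / (((n : ℕ+) : ℕ) : ℂ)) := by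
      rw [eq_div_iff (hexpne _)]
      rw [← expC_comp, ha0, hz0, expC_aOf]
    have hE : Tendsto (fun j => Complex.exp (Complex.I * zseq j / (((n : ℕ+) : ℕ) : ℂ)))
        atTop (nhds (Complex.exp (Complex.I * z0 / (((n : ℕ+) : ℕ) : ℂ)))) := by
      apply (Complex.continuous_exp.tendsto _).comp
      exact (tendsto_const_nhds.mul hzt).div_const _
    have hq : Tendsto (fun j => (x j).1 n /
          Complex.exp (Complex.I * zseq j / (((n : ℕ+) : ℕ) : ℂ))) atTop
        (nhds (p.1 n / Complex.exp (Complex.I * z0 / (((n : ℕ+) : ℕ) : ℂ)))) := by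
      have := Filter.Tendsto.div (hcoord n) hE (hexpne _)
      exact this
    apply eventually_eq_of_tendsto_expnz (n := n) (u := fun j => (aseq j).1 n) (c := a0.1 n)
    rw [hcompp]
    exact hq.congr (fun j => (hcompj j).symm)
  have hpair : Tendsto (fun j => ((aseq j, zseq j) : Zhat × ℂ)) atTop
      (nhds ((a0, z0) : Zhat × ℂ)) := hat.prodMk_nhds hzt
  have hfinal : Tendsto ((fun p : Zhat × ℂ => Flim g p.1 p.2) ∘
        (fun j => ((aseq j, zseq j) : Zhat × ℂ)))
      atTop (nhds ((fun p : Zhat × ℂ => Flim g p.1 p.2) ((a0, z0) : Zhat × ℂ))) :=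
    Filter.Tendsto.comp ((cont_Flim hgc hg).tendsto ((a0, z0) : Zhat × ℂ)) hpair
  have hgoal : Tendsto (fun j => fF g (x j)) atTop
      (nhds ((fun p : Zhat × ℂ => Flim g p.1 p.2) ((a0, z0) : Zhat × ℂ))) :=
    hfinal.congr (fun j => (hfa j).symm)
  exact hgoal

end S9
namespace S9

lemma cont_nuC : Continuous nuC := by
  apply Continuous.subtype_mk
  apply continuous_pi
  intro n
  exact Complex.continuous_exp.comp
    ((continuous_const.mul continuous_id).div_const _)

lemma cont_phiC : Continuous phiC := by
  apply Continuous.subtype_mk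
  apply continuous_pi
  intro n
  have h0 : Continuous (fun c : ZMod ((n : ℕ+) : ℕ) =>
      Complex.exp (((2 * π * (c.val : ℕ) / ((n : ℕ+) : ℕ) : ℝ) : ℂ) * Complex.I)) :=
    continuous_of_discreteTopology
  exact h0.comp (cont_zcoord n)

lemma cont_mulC : Continuous (fun q : CSolQ × CSolQ => q.1 * q.2) := by
  apply Continuous.subtype_mk
  apply continuous_pi
  intro n
  exact ((cont_coord n).comp continuous_fst).mul ((cont_coord n).comp continuous_snd)

lemma cont_expC : Continuous (fun p : Zhat × ℂ => expC p.1 p.2) :=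
  cont_mulC.comp ((cont_phiC.comp continuous_fst).prodMk (cont_nuC.comp continuous_snd))

instance : CompactSpace Zhat := by
  have hcl : IsClosed {a : (n : ℕ+) → ZMod ((n : ℕ+) : ℕ) |
      ∀ (n k : ℕ+), ZMod.castHom
        (show ((n : ℕ+) : ℕ) ∣ ((n * k : ℕ+) : ℕ) by
          rw [PNat.mul_coe]; exact dvd_mul_right _ _)
        (ZMod ((n : ℕ+) : ℕ)) (a (n * k)) = a n} := by
    rw [Set.setOf_forall]
    refine isClosed_iInter (fun n => ?_)
    rw [Set.setOf_forall]
    refine isClosed_iInter (fun k => ?_)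
    exact isClosed_eq
      ((continuous_of_discreteTopology).comp (continuous_apply (n * k)))
      (continuous_apply n)
  exact isCompact_iff_compactSpace.mp hcl.isCompact

lemma pnat_pos (c : ℕ+) : 0 < ((c : ℕ+) : ℕ) := c.pos

/-- Forward direction: a continuous extension forces limit periodicity. -/
lemma forward_lp {f : CSolQ → ℂ} (hf : Continuous f) {g : ℂ → ℂ}
    (hfg : ∀ z, f (nuC z) = g z) : LimitPeriodicX g := by
  by_contra hcon
  rw [LimitPeriodicX] at hcon
  push_neg at hcon
  obtain ⟨ε, hε, K, hK, hbad⟩ := hcon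
  choose zs hzs ns hns hlow using fun j : ℕ => hbad (fac j)
  set ms : ℕ → ℤ := fun j => round ((zs j).re / (2 * π)) with hms
  set ws : ℕ → ℂ := fun j => zs j - 2 * (π : ℂ) * ((ms j : ℤ) : ℂ) with hws
  obtain ⟨r, hr⟩ := hK.isBounded.subset_closedBall 0
  have hwmem : ∀ j, ws j ∈ Metric.closedBall (0 : ℂ) (r + 4) := by
    intro j
    rw [Metric.mem_closedBall, dist_zero_right]
    have hre : |(ws j).re| ≤ π := by
      have h1 := abs_sub_round ((zs j).re / (2 * π))
      have h2 : (ws j).re = (zs j).re - 2 * π * (ms j : ℝ) := by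
        rw [hws]
        simp [Complex.sub_im, Complex.sub_re]
      have hπ : (0 : ℝ) < 2 * π := by positivity
      rw [h2, hms]
      have h3 : (zs j).re - 2 * π * (round ((zs j).re / (2 * π)) : ℝ)
          = (2 * π) * ((zs j).re / (2 * π) - (round ((zs j).re / (2 * π)) : ℝ)) := by
        field_simp
      rw [h3, abs_mul, abs_of_pos hπ]
      calc (2 * π) * |(zs j).re / (2 * π) - (round ((zs j).re / (2 * π)) : ℝ)|
          ≤ (2 * π) * (1 / 2) := by
            apply mul_le_mul_of_nonneg_left h1 (le_of_lt hπ)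
        _ = π := by ring
    have him : |(ws j).im| ≤ r := by
      have h2 : (ws j).im = (zs j).im := by
        rw [hws]
        simp
      have h3 := hr (hzs j)
      rw [Metric.mem_closedBall, Real.dist_eq, sub_zero] at h3
      rw [h2]
      exact h3
    calc ‖ws j‖ ≤ |(ws j).re| + |(ws j).im| := by
          exact Complex.norm_le_abs_re_add_abs_im _
      _ ≤ π + r := add_le_add hre him
      _ ≤ r + 4 := by nlinarith [Real.pi_le_four]
  obtain ⟨winf, _, φ₁, hφ₁, hwt⟩ :=
    (isCompact_closedBall (0 : ℂ) (r + 4)).tendsto_subseq hwmem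
  have hamem : ∀ j, iotaZ (ms (φ₁ j)) ∈ (Set.univ : Set Zhat) := fun _ => trivial
  obtain ⟨ainf, -, φ₂, hφ₂, hat⟩ := isCompact_univ.tendsto_subseq hamem
  set φ : ℕ → ℕ := φ₁ ∘ φ₂ with hφdef
  have hφ : StrictMono φ := hφ₁.comp hφ₂
  have hwt2 : Tendsto (fun j => ws (φ j)) atTop (nhds winf) :=
    hwt.comp hφ₂.tendsto_atTop
  have hat2 : Tendsto (fun j => iotaZ (ms (φ j))) atTop (nhds ainf) := hat
  have hnt : Tendsto (fun j => iotaZ (ms (φ j)) + iotaZ (ns (φ j))) atTop (nhds ainf) := by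
    rw [tendsto_Zhat_iff]
    intro c
    have h1 := (tendsto_Zhat_iff.mp hat2) c
    have h2 : ∀ᶠ j in atTop, ((ns (φ j) : ℤ) : ZMod ((c : ℕ+) : ℕ)) = 0 := by
      filter_upwards [eventually_ge_atTop ((c : ℕ+) : ℕ)] with j hj
      have hdvd : (((fac (φ j) : ℕ+) : ℕ) : ℤ) ∣ ns (φ j) := hns (φ j)
      have hle : ((c : ℕ+) : ℕ) ≤ φ j + 1 := by
        have h : j ≤ φ j := hφ.le_apply
        omega
      have hcd : (((c : ℕ+) : ℕ) : ℤ) ∣ ns (φ j) :=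
        dvd_trans (Int.natCast_dvd_natCast.mpr (dvd_fac c.pos hle)) hdvd
      rwa [ZMod.intCast_zmod_eq_zero_iff_dvd]
    filter_upwards [h1, h2] with j e1 e2
    show (iotaZ (ms (φ j))).1 c + (iotaZ (ns (φ j))).1 c = ainf.1 c
    have e3 : (iotaZ (ns (φ j))).1 c = ((ns (φ j) : ℤ) : ZMod ((c : ℕ+) : ℕ)) := rfl
    rw [e3, e2, add_zero]
    exact e1
  set F : Zhat × ℂ → ℂ := fun p => f (expC p.1 p.2) with hFdef
  have hFc : Continuous F := hf.comp cont_expC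
  have hzw : ∀ j, zs j = ws j + 2 * (π : ℂ) * ((ms j : ℤ) : ℂ) := by
    intro j; rw [hws]; ring
  have hg1 : ∀ j, g (zs j) = F (iotaZ (ms j), ws j) := by
    intro j
    rw [← hfg (zs j)]
    show f (nuC (zs j)) = f (expC (iotaZ (ms j)) (ws j))
    rw [hzw j, nuC_shift]
  have hg2 : ∀ j, g (zs j + 2 * (π : ℂ) * ((ns j : ℤ) : ℂ))
      = F (iotaZ (ms j) + iotaZ (ns j), ws j) := by
    intro j
    rw [← hfg _]
    show f (nuC _) = f (expC (iotaZ (ms j) + iotaZ (ns j)) (ws j))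
    rw [← iotaZ_add]
    have harg : zs j + 2 * (π : ℂ) * ((ns j : ℤ) : ℂ)
        = ws j + 2 * (π : ℂ) * (((ms j + ns j : ℤ)) : ℂ) := by
      rw [hzw j]; push_cast; ring
    rw [harg, nuC_shift]
  have hT1 : Tendsto ((fun p : Zhat × ℂ => F p) ∘ (fun j => (iotaZ (ms (φ j)), ws (φ j))))
      atTop (nhds (F (ainf, winf))) :=
    Filter.Tendsto.comp (hFc.tendsto ((ainf, winf) : Zhat × ℂ)) (hat2.prodMk_nhds hwt2)
  have hT2 : Tendsto ((fun p : Zhat × ℂ => F p) ∘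
        (fun j => (iotaZ (ms (φ j)) + iotaZ (ns (φ j)), ws (φ j))))
      atTop (nhds (F (ainf, winf))) :=
    Filter.Tendsto.comp (hFc.tendsto ((ainf, winf) : Zhat × ℂ)) (hnt.prodMk_nhds hwt2)
  have hdiff : Tendsto (fun j => F (iotaZ (ms (φ j)) + iotaZ (ns (φ j)), ws (φ j))
      - F (iotaZ (ms (φ j)), ws (φ j))) atTop (nhds 0) := by
    have h := hT2.sub hT1
    rw [sub_self] at h
    exact h
  have hlow2 : ∀ j, ε ≤ ‖F (iotaZ (ms (φ j)) + iotaZ (ns (φ j)), ws (φ j))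
      - F (iotaZ (ms (φ j)), ws (φ j))‖ := by
    intro j
    have := hlow (φ j)
    rwa [hg1 (φ j), hg2 (φ j)] at this
  have hfin := ge_of_tendsto hdiff.norm (Filter.Eventually.of_forall hlow2)
  rw [norm_zero] at hfin
  linarith

lemma diff_g {f : CSolQ → ℂ} {g : ℂ → ℂ} (hfg : ∀ z, f (nuC z) = g z)
    (hdiff : ∀ a : Zhat, Differentiable ℂ fun z : ℂ => f (expC a z)) :
    Differentiable ℂ g := by
  have h0 := hdiff 0
  have heq : (fun z : ℂ => f (expC 0 z)) = g := funext fun z => by rw [expC_zero, hfg]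
  rwa [heq] at h0

end S9
/-- Given `g : ℂ → ℂ`, there is a continuous function
`f : ℂ*_ℚ → ℂ` with `f ∘ ν = g` iff `g` is continuous and limit periodic with
respect to `x`; and such an `f` can be chosen leafwise holomorphic iff `g` is in
addition holomorphic on `ℂ`. -/
theorem statement9 (g : ℂ → ℂ) :
    ((∃ f : CSolQ → ℂ, Continuous f ∧ ∀ z : ℂ, f (nuC z) = g z) ↔
      (Continuous g ∧ LimitPeriodicX g)) ∧
    ((∃ f : CSolQ → ℂ, Continuous f ∧ (∀ z : ℂ, f (nuC z) = g z) ∧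
        ∀ a : Zhat, Differentiable ℂ fun z : ℂ => f (expC a z)) ↔
      (Continuous g ∧ LimitPeriodicX g ∧ Differentiable ℂ g)) := by
  have hgc_of : ∀ f : CSolQ → ℂ, Continuous f → (∀ z : ℂ, f (nuC z) = g z) → Continuous g := by
    intro f hf hfg
    have heq : g = fun z => f (nuC z) := funext fun z => (hfg z).symm
    rw [heq]
    exact hf.comp S9.cont_nuC
  constructor
  · constructor
    · rintro ⟨f, hf, hfg⟩
      exact ⟨hgc_of f hf hfg, S9.forward_lp hf hfg⟩
    · rintro ⟨hgc, hg⟩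
      exact ⟨S9.fF g, S9.cont_fF hgc hg, fun z => S9.fF_nuC hg z⟩
  · constructor
    · rintro ⟨f, hf, hfg, hdiff⟩
      exact ⟨hgc_of f hf hfg, S9.forward_lp hf hfg, S9.diff_g hfg hdiff⟩
    · rintro ⟨hgc, hg, hgd⟩
      refine ⟨S9.fF g, S9.cont_fF hgc hg, fun z => S9.fF_nuC hg z, fun a => ?_⟩
      have heq : (fun z : ℂ => S9.fF g (expC a z)) = fun z => S9.Flim g a z :=
        funext (S9.fF_expC hg a)
      rw [heq]
      exact S9.diff_Flim hg hgd a

end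
end

section
/- Every continuous group homomorphism χ : S¹_ℚ → S¹ is of the form χ(x) = π_n(x)^m for some positive integer n and some integer m; consequently the assignment m/n ↦ (π_n)^m defines a group isomorphism from the discrete group (ℚ, +) onto the group of continuous characters of S¹_ℚ, i.e., the Pontryagin dual of S¹_ℚ is isomorphic to ℚ. -/
open Complex Real Filter MeasureTheory

noncomputable section

/-! ### Auxiliary lemmas -/

/-- Extract a real congruence from equality of exponentials. -/
lemma exp_real_eq_iff {α β : ℝ}
    (h : Complex.exp ((α : ℂ) * Complex.I) = Complex.exp ((β : ℂ) * Complex.I)) :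
    ∃ m : ℤ, α = β + 2 * π * m := by
  rw [Complex.exp_eq_exp_iff_exists_int] at h
  obtain ⟨m, hm⟩ := h
  refine ⟨m, ?_⟩
  have h2 : ((α : ℝ) : ℂ) * Complex.I = ((β + 2 * π * m : ℝ) : ℂ) * Complex.I := by
    push_cast
    push_cast at hm
    linear_combination hm
  have h3 := mul_right_cancel₀ Complex.I_ne_zero h2
  exact_mod_cast h3

/-- Integer version of `exp_natCast_congr`. -/
lemma exp_intCast_congr (n : ℕ+) (A B : ℤ)
    (h : (A : ZMod ((n : ℕ+) : ℕ)) = (B : ZMod ((n : ℕ+) : ℕ))) :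
    Complex.exp (((2 * π * A / ((n : ℕ+) : ℕ) : ℝ) : ℂ) * Complex.I)
      = Complex.exp (((2 * π * B / ((n : ℕ+) : ℕ) : ℝ) : ℂ) * Complex.I) := by
  rw [ZMod.intCast_eq_intCast_iff] at h
  obtain ⟨j, hj⟩ : ∃ j : ℤ, B = A + ((n : ℕ+) : ℕ) * j := by
    obtain ⟨j, hj⟩ := h.dvd
    exact ⟨j, by linarith⟩
  have hn : ((((n : ℕ+) : ℕ) : ℝ)) ≠ 0 := by exact_mod_cast n.ne_zero
  have key : ((2 * π * B / ((n : ℕ+) : ℕ) : ℝ) : ℂ) * Complex.I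
      = ((2 * π * A / ((n : ℕ+) : ℕ) : ℝ) : ℂ) * Complex.I
        + (j : ℂ) * (2 * (π : ℂ) * Complex.I) := by
    have hnC : ((((n : ℕ+) : ℕ) : ℂ)) ≠ 0 := by exact_mod_cast n.ne_zero
    have hB : (B : ℝ) = (A : ℝ) + (((n : ℕ+) : ℕ) : ℝ) * (j : ℝ) := by exact_mod_cast hj
    push_cast [hB]
    field_simp
  rw [key, Complex.exp_add, Complex.exp_int_mul_two_pi_mul_I, mul_one]

/-- Roots of unity on the circle are exponentials of rational angles. -/
lemma exists_int_exp (n : ℕ+) (z : ℂ) (h1 : ‖z‖ = 1) (h2 : z ^ ((n : ℕ+) : ℕ) = 1) :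
    ∃ j : ℤ, z = Complex.exp (((2 * π * j / ((n : ℕ+) : ℕ) : ℝ) : ℂ) * Complex.I) := by
  have habs : ‖z‖ = 1 := h1
  have hz : z = Complex.exp ((z.arg : ℂ) * Complex.I) := by
    conv_lhs => rw [← Complex.norm_mul_exp_arg_mul_I z]
    rw [habs]
    simp
  have hpow : Complex.exp (((((n : ℕ+) : ℕ) * z.arg : ℝ) : ℂ) * Complex.I)
      = Complex.exp (((0 : ℝ) : ℂ) * Complex.I) := by
    rw [show ((((n : ℕ+) : ℕ) * z.arg : ℝ) : ℂ) * Complex.I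
      = (((n : ℕ+) : ℕ) : ℂ) * ((z.arg : ℂ) * Complex.I) by push_cast; ring]
    rw [Complex.exp_nat_mul, ← hz, h2]
    simp
  obtain ⟨m, hm⟩ := exp_real_eq_iff hpow
  refine ⟨m, ?_⟩
  rw [hz]
  have hn : ((((n : ℕ+) : ℕ) : ℝ)) ≠ 0 := by exact_mod_cast n.ne_zero
  rw [zero_add] at hm
  have harg : z.arg = 2 * π * m / ((n : ℕ+) : ℕ) := by
    rw [eq_div_iff hn]
    linear_combination hm
  rw [harg]

/-- Componentwise difference on `ẑ`. -/
def subZ (a b : Zhat) : Zhat :=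
  ⟨fun n => a.1 n - b.1 n, fun n k => by rw [map_sub, a.2 n k, b.2 n k]⟩

lemma one_coord (n : ℕ+) : (1 : SolQ).1 n = 1 := rfl

lemma mul_coord (x y : SolQ) (n : ℕ+) : (x * y).1 n = x.1 n * y.1 n := rfl

lemma solq_coord_norm (x : SolQ) (n : ℕ+) : ‖x.1 n‖ = 1 := x.2.1 n

lemma solq_coord_ne (x : SolQ) (n : ℕ+) : x.1 n ≠ 0 := by
  intro h
  have := x.2.1 n
  rw [h] at this
  simp at this

lemma coord_pow (x : SolQ) (d k n : ℕ+) (h : d * k = n) :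
    x.1 d = x.1 n ^ ((k : ℕ+) : ℕ) := by
  rw [← h]
  exact (x.2.2 d k).symm

lemma coord_zpow (x : SolQ) (d k n : ℕ+) (h : d * k = n) (m : ℤ) :
    (x.1 d) ^ m = (x.1 n) ^ (((k : ℕ+) : ℕ) * m : ℤ) := by
  rw [coord_pow x d k n h, ← zpow_natCast, ← zpow_mul]

lemma nuS_coord (t : ℝ) (n : ℕ+) :
    (nuS t).1 n = Complex.exp (((t / ((n : ℕ+) : ℕ) : ℝ) : ℂ) * Complex.I) := rfl

lemma nuS_add (s t : ℝ) : nuS (s + t) = nuS s * nuS t := by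
  apply Subtype.ext
  funext n
  rw [mul_coord, nuS_coord, nuS_coord, nuS_coord, ← Complex.exp_add]
  congr 1
  push_cast
  ring

lemma continuous_nuS : Continuous nuS := by
  apply Continuous.subtype_mk
  apply continuous_pi
  intro n
  exact Complex.continuous_exp.comp
    ((Complex.continuous_ofReal.comp (continuous_id.div_const _)).mul continuous_const)

lemma phiS_coord (a : Zhat) (n : ℕ+) : (phiS a).1 n = phiComp a n := rfl

lemma zhat_add_coord (a b : Zhat) (n : ℕ+) : (a + b).1 n = a.1 n + b.1 n := rfl

lemma phiS_add (a b : Zhat) : phiS (a + b) = phiS a * phiS b := by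
  apply Subtype.ext
  funext n
  rw [mul_coord, phiS_coord, phiS_coord, phiS_coord]
  haveI : NeZero ((n : ℕ+) : ℕ) := ⟨n.ne_zero⟩
  have h1 : phiComp (a + b) n
      = Complex.exp (((2 * π * (((a.1 n).val + (b.1 n).val : ℕ)) / ((n : ℕ+) : ℕ) : ℝ) : ℂ)
          * Complex.I) := by
    apply exp_natCast_congr
    push_cast
    rw [ZMod.natCast_val, ZMod.natCast_val, ZMod.natCast_val, ZMod.cast_id, ZMod.cast_id,
      ZMod.cast_id]
    rfl
  rw [h1]
  unfold phiComp
  rw [← Complex.exp_add]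
  congr 1
  push_cast
  ring

lemma phiS_zero : phiS 0 = 1 := by
  apply Subtype.ext
  funext n
  rw [phiS_coord, one_coord]
  unfold phiComp
  have h0 : ((0 : Zhat).1 n).val = 0 := ZMod.val_zero
  rw [h0]
  norm_num

lemma nsmulZ_zero (a : Zhat) : nsmulZ 0 a = 0 := by
  apply Subtype.ext
  funext n
  show ((0 : ℕ) : ZMod ((n : ℕ+) : ℕ)) * a.1 n = 0
  simp

lemma nsmulZ_succ (k : ℕ) (a : Zhat) : nsmulZ (k + 1) a = nsmulZ k a + a := by
  apply Subtype.ext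
  funext n
  show (((k : ℕ) + 1 : ℕ) : ZMod ((n : ℕ+) : ℕ)) * a.1 n
    = ((k : ℕ) : ZMod ((n : ℕ+) : ℕ)) * a.1 n + a.1 n
  push_cast
  ring

/-- `φ(ιk) = ν(2πk)` for natural `k`. -/
lemma phiS_iota_nat (k : ℕ) : phiS (iotaZ k) = nuS (2 * π * k) := by
  apply Subtype.ext
  funext n
  rw [phiS_coord, nuS_coord]
  haveI : NeZero ((n : ℕ+) : ℕ) := ⟨n.ne_zero⟩
  unfold phiComp
  have h1 : ((iotaZ (k : ℤ)).1 n).val = (((k : ℤ) : ZMod ((n : ℕ+) : ℕ))).val := rfl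
  rw [h1]
  have h2 := exp_natCast_congr n (((k : ℤ) : ZMod ((n : ℕ+) : ℕ))).val k
    (by rw [ZMod.natCast_val, ZMod.cast_id]; push_cast; rfl)
  rw [h2]

lemma nsmulZ_coord (k : ℕ) (a : Zhat) (n : ℕ+) :
    (nsmulZ k a).1 n = ((k : ℕ) : ZMod ((n : ℕ+) : ℕ)) * a.1 n := rfl

lemma chi_phiS_pow (χ : SolQ → ℂ) (hmul : ∀ x y : SolQ, χ (x * y) = χ x * χ y)
    (hχ1 : χ 1 = 1) (a : Zhat) : ∀ k : ℕ, χ (phiS (nsmulZ k a)) = χ (phiS a) ^ k := by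
  intro k
  induction k with
  | zero => rw [nsmulZ_zero, phiS_zero, hχ1, pow_zero]
  | succ k ih => rw [nsmulZ_succ, phiS_add, hmul, ih, pow_succ]

lemma zhat_decomp (a : Zhat) (N : ℕ+) :
    a = iotaZ (((a.1 N).val : ℕ) : ℤ) + subZ a (iotaZ (((a.1 N).val : ℕ) : ℤ)) := by
  apply Subtype.ext
  funext n
  show a.1 n = ((((a.1 N).val : ℕ) : ℤ) : ZMod ((n : ℕ+) : ℕ))
    + (a.1 n - ((((a.1 N).val : ℕ) : ℤ) : ZMod ((n : ℕ+) : ℕ)))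
  ring

lemma subZ_coord_self (a : Zhat) (N : ℕ+) :
    (subZ a (iotaZ (((a.1 N).val : ℕ) : ℤ))).1 N = 0 := by
  show a.1 N - ((((a.1 N).val : ℕ) : ℤ) : ZMod ((N : ℕ+) : ℕ)) = 0
  haveI : NeZero ((N : ℕ+) : ℕ) := ⟨N.ne_zero⟩
  push_cast
  rw [ZMod.natCast_val, ZMod.cast_id]
  ring

/-- Surjectivity of `exp : ẑ × ℝ → S¹_ℚ`. -/
lemma expS_surj (x : SolQ) : ∃ (a : Zhat) (t : ℝ), x = phiS a * nuS t := by
  set t : ℝ := (x.1 1).arg with ht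
  have hx1 : x.1 1 = Complex.exp ((t : ℂ) * Complex.I) := by
    conv_lhs => rw [← Complex.norm_mul_exp_arg_mul_I (x.1 1)]
    rw [show ‖x.1 1‖ = 1 by exact x.2.1 1]
    simp [ht]
  set y : ℕ+ → ℂ := fun n =>
    x.1 n * Complex.exp ((((-t) / ((n : ℕ+) : ℕ) : ℝ) : ℂ) * Complex.I) with hy
  have hynorm : ∀ n, ‖y n‖ = 1 := by
    intro n
    rw [hy]
    simp only
    rw [norm_mul, x.2.1 n, exp_real_mul_I_norm, one_mul]
  have hypow : ∀ (n k : ℕ+), y (n * k) ^ ((k : ℕ+) : ℕ) = y n := by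
    intro n k
    rw [hy]
    simp only
    rw [mul_pow, x.2.2 n k, exp_div_pow]
  have hyroot : ∀ n : ℕ+, y n ^ ((n : ℕ+) : ℕ) = 1 := by
    intro n
    have h1 : y (1 * n) ^ ((n : ℕ+) : ℕ) = y 1 := hypow 1 n
    rw [one_mul] at h1
    have h2 : y 1 = 1 := by
      rw [hy]
      simp only
      rw [hx1, ← Complex.exp_add]
      rw [show ((t : ℂ) * Complex.I + (((-t) / ((1 : ℕ+) : ℕ) : ℝ) : ℂ) * Complex.I) = 0 by
        push_cast; ring]
      exact Complex.exp_zero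
    rw [← h2, h1]
  have hj : ∀ n : ℕ+, ∃ j : ℤ,
      y n = Complex.exp (((2 * π * j / ((n : ℕ+) : ℕ) : ℝ) : ℂ) * Complex.I) :=
    fun n => exists_int_exp n (y n) (hynorm n) (hyroot n)
  choose j hjspec using hj
  have hcompat : ∀ (n k : ℕ+),
      ((j (n * k) : ℤ) : ZMod ((n : ℕ+) : ℕ)) = ((j n : ℤ) : ZMod ((n : ℕ+) : ℕ)) := by
    intro n k
    have h1 : Complex.exp (((2 * π * (j (n * k)) / ((n : ℕ+) : ℕ) : ℝ) : ℂ) * Complex.I)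
        = Complex.exp (((2 * π * (j n) / ((n : ℕ+) : ℕ) : ℝ) : ℂ) * Complex.I) := by
      rw [← exp_div_pow (2 * π * (j (n * k))) n k, ← hjspec (n * k), hypow n k, hjspec n]
    obtain ⟨m, hm⟩ := exp_real_eq_iff h1
    have hn : ((((n : ℕ+) : ℕ) : ℝ)) ≠ 0 := by exact_mod_cast n.ne_zero
    have hπ : (2 : ℝ) * π ≠ 0 := by positivity
    have hint : (j (n * k) : ℝ) = (j n : ℝ) + (((n : ℕ+) : ℕ) : ℝ) * (m : ℝ) := by
      have h2 : 2 * π * (j (n * k) : ℝ)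
          = 2 * π * ((j n : ℝ) + (((n : ℕ+) : ℕ) : ℝ) * (m : ℝ)) := by
        field_simp at hm
        linear_combination (2 * π) * hm
      exact mul_left_cancel₀ hπ h2
    have hintZ : j (n * k) = j n + (((n : ℕ+) : ℕ) : ℤ) * m := by exact_mod_cast hint
    rw [hintZ]
    push_cast
    rw [ZMod.natCast_self]
    ring
  set a : Zhat := ⟨fun n => ((j n : ℤ) : ZMod ((n : ℕ+) : ℕ)), fun n k => by
    beta_reduce
    rw [map_intCast]
    exact hcompat n k⟩ with ha
  refine ⟨a, t, Subtype.ext (funext fun n => ?_)⟩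
  rw [mul_coord, phiS_coord, nuS_coord]
  have hphia : phiComp a n
      = Complex.exp (((2 * π * (j n) / ((n : ℕ+) : ℕ) : ℝ) : ℂ) * Complex.I) := by
    haveI : NeZero ((n : ℕ+) : ℕ) := ⟨n.ne_zero⟩
    have hcast : ((((a.1 n).val : ℕ) : ℤ) : ZMod ((n : ℕ+) : ℕ))
        = ((j n : ℤ) : ZMod ((n : ℕ+) : ℕ)) := by
      push_cast
      rw [ZMod.natCast_val, ZMod.cast_id]
    have h5 := exp_intCast_congr n (((a.1 n).val : ℕ) : ℤ) (j n) hcast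
    have harg : ((2 * π * (((a.1 n).val : ℕ) : ℝ) / ((n : ℕ+) : ℕ) : ℝ))
        = ((2 * π * (((((a.1 n).val : ℕ) : ℤ)) : ℝ) / ((n : ℕ+) : ℕ) : ℝ)) := by
      push_cast
      ring
    unfold phiComp
    rw [harg]
    exact h5
  rw [hphia, ← hjspec n]
  rw [hy]
  simp only
  rw [mul_assoc, ← Complex.exp_add]
  rw [show ((((-t) / ((n : ℕ+) : ℕ) : ℝ) : ℂ) * Complex.I
      + ((t / ((n : ℕ+) : ℕ) : ℝ) : ℂ) * Complex.I) = 0 by push_cast; field_simp; ring]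
  rw [Complex.exp_zero, mul_one]
lemma char_real (f : ℝ → ℂ) (hc : Continuous f) (hm : ∀ s t, f (s + t) = f s * f t)
    (hn : ∀ t, ‖f t‖ = 1) : ∃ c : ℝ, ∀ t, f t = Complex.exp ((c : ℂ) * t * Complex.I) := by
  have hne : ∀ t, f t ≠ 0 := by
    intro t ht
    have := hn t
    rw [ht] at this
    simp at this
  have h0 : f 0 = 1 := by
    have h := hm 0 0
    rw [add_zero] at h
    have h2 : f 0 * 1 = f 0 * f 0 := by rw [mul_one]; exact h
    exact (mul_left_cancel₀ (hne 0) h2).symm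
  set F : ℝ → ℂ := fun t => ∫ s in (0:ℝ)..t, f s with hFdef
  have hF : ∀ b : ℝ, HasDerivAt F (f b) b := fun b =>
    intervalIntegral.integral_hasDerivAt_right (hc.intervalIntegrable _ _)
      (hc.stronglyMeasurable.stronglyMeasurableAtFilter) hc.continuousAt
  have hF0 : F 0 = 0 := by simp [hFdef]
  have hslope := hasDerivAt_iff_tendsto_slope.mp (hF 0)
  rw [h0] at hslope
  have hev : ∀ᶠ δ in nhdsWithin 0 {(0:ℝ)}ᶜ, slope F 0 δ ≠ 0 :=
    hslope.eventually_ne one_ne_zero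
  obtain ⟨δ, hδne, hδmem⟩ : ∃ δ : ℝ, slope F 0 δ ≠ 0 ∧ δ ∈ ({(0:ℝ)}ᶜ : Set ℝ) :=
    (hev.and (eventually_mem_nhdsWithin)).exists
  have hFδ : F δ ≠ 0 := by
    intro h
    apply hδne
    simp [slope, hF0, h]
  have key : ∀ t, f t * F δ = F (t + δ) - F t := by
    intro t
    have h1 : f t * F δ = ∫ s in (0:ℝ)..δ, f t * f s :=
      (intervalIntegral.integral_const_mul _ _).symm
    have h2 : (∫ s in (0:ℝ)..δ, f t * f s) = ∫ s in (0:ℝ)..δ, f (t + s) := by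
      simp [hm]
    have h3 : (∫ s in (0:ℝ)..δ, f (t + s)) = ∫ u in t..(t + δ), f u := by
      simpa using intervalIntegral.integral_comp_add_left f t
    have h4 : F (t + δ) - F t = ∫ u in t..(t + δ), f u := by
      rw [hFdef]
      simp only
      rw [eq_comm, eq_sub_iff_add_eq', ← intervalIntegral.integral_add_adjacent_intervals
        (hc.intervalIntegrable 0 t) (hc.intervalIntegrable t (t + δ))]
    rw [h1, h2, h3, h4]
  have hfeq : ∀ u, f u = (F (u + δ) - F u) * (F δ)⁻¹ :=
    fun u => (eq_mul_inv_iff_mul_eq₀ hFδ).mpr (key u)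
  set c : ℂ := (f δ - 1) * (F δ)⁻¹ with hcdef
  have hd : ∀ t : ℝ, HasDerivAt f (c * f t) t := by
    intro t
    have h1 : HasDerivAt (fun u : ℝ => F (u + δ)) (f (t + δ)) t :=
      HasDerivAt.comp_add_const t δ (hF (t + δ))
    have h2 : HasDerivAt (fun u : ℝ => (F (u + δ) - F u) * (F δ)⁻¹)
        ((f (t + δ) - f t) * (F δ)⁻¹) t := (h1.sub (hF t)).mul_const _
    have hval : (f (t + δ) - f t) * (F δ)⁻¹ = c * f t := by
      rw [hm t δ, hcdef]; ring
    rw [hval] at h2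
    exact h2.congr_of_eventuallyEq (Eventually.of_forall hfeq)
  have hE : ∀ t : ℝ, HasDerivAt (fun u : ℝ => Complex.exp (-(c * u)))
      (Complex.exp (-(c * t)) * (-c)) t := by
    intro t
    have inner : HasDerivAt (fun z : ℂ => -(c * z)) (-c) (t:ℂ) := by
      exact (((hasDerivAt_id (t:ℂ)).const_mul c).neg).congr_deriv (by simp)
    have := (Complex.hasDerivAt_exp (-(c * t))).comp (t:ℂ) inner
    simpa using this.comp_ofReal
  set g : ℝ → ℂ := fun t => f t * Complex.exp (-(c * t)) with hgdef
  have hg : ∀ t : ℝ, HasDerivAt g 0 t := by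
    intro t
    have := (hd t).mul (hE t)
    have h0' : c * f t * Complex.exp (-(c * t)) + f t * (Complex.exp (-(c * t)) * (-c)) = 0 := by
      ring
    rwa [h0'] at this
  have hgc : ∀ t, g t = 1 := by
    intro t
    have := is_const_of_deriv_eq_zero (fun x => (hg x).differentiableAt)
      (fun x => (hg x).deriv) t 0
    rw [this, hgdef]
    simp [h0]
  have hf : ∀ t : ℝ, f t = Complex.exp (c * t) := by
    intro t
    have h := hgc t
    rw [hgdef] at h
    simp only at h
    rw [show Complex.exp (-(c * t)) = (Complex.exp (c * t))⁻¹ by rw [← Complex.exp_neg],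
      mul_inv_eq_iff_eq_mul₀ (Complex.exp_ne_zero _), one_mul] at h
    exact h
  have hre : c.re = 0 := by
    have h := hn 1
    rw [hf 1, Complex.norm_exp] at h
    rw [Real.exp_eq_one_iff] at h
    simpa using h
  obtain ⟨c', hc'⟩ : ∃ c' : ℝ, c = (c' : ℂ) * Complex.I :=
    ⟨c.im, by apply Complex.ext <;> simp [hre]⟩
  refine ⟨c', fun t => ?_⟩
  rw [hf t, hc']
  exact congrArg Complex.exp (by ring)
lemma norm_exp_sub_one_sq (x : ℝ) :
    ‖Complex.exp ((x:ℂ) * Complex.I) - 1‖ ^ 2 = 2 - 2 * Real.cos x := by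
  rw [Complex.sq_norm, Complex.normSq_apply]
  simp only [Complex.sub_re, Complex.sub_im, Complex.exp_ofReal_mul_I_re,
    Complex.exp_ofReal_mul_I_im, Complex.one_re, Complex.one_im]
  nlinarith [Real.sin_sq_add_cos_sq x]

lemma circle_eq_one (w : ℂ) (hw : ‖w‖ = 1) (h : ∀ k : ℕ, ‖w ^ k - 1‖ < 1) : w = 1 := by
  have habs : ‖w‖ = 1 := hw
  have hwexp : w = Complex.exp ((w.arg : ℂ) * Complex.I) := by
    conv_lhs => rw [← Complex.norm_mul_exp_arg_mul_I w]
    rw [habs]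
    simp
  have haux : ∀ θ : ℝ, 0 < θ → θ ≤ π →
      ¬(∀ k : ℕ, ‖Complex.exp ((θ:ℂ) * Complex.I) ^ k - 1‖ < 1) := by
    intro θ hθ hθπ hcl
    set k := ⌈(π/2)/θ⌉₊ with hk
    have hk1 : π/2 ≤ (k:ℝ) * θ := by
      rw [← div_le_iff₀ hθ]
      exact Nat.le_ceil _
    have hk2 : (k:ℝ) * θ ≤ π + π/2 := by
      have h1 : (k:ℝ) < (π/2)/θ + 1 := Nat.ceil_lt_add_one (by positivity)
      have h2 := mul_lt_mul_of_pos_right h1 hθ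
      have h3 : (π/2)/θ * θ = π/2 := div_mul_cancel₀ _ hθ.ne'
      nlinarith
    have hcos := Real.cos_nonpos_of_pi_div_two_le_of_le hk1 hk2
    have hnorm : ‖Complex.exp ((θ:ℂ) * Complex.I) ^ k - 1‖ ^ 2
        = 2 - 2 * Real.cos ((k:ℝ) * θ) := by
      rw [← Complex.exp_nat_mul, show (k:ℂ) * ((θ:ℂ) * Complex.I) = ((((k:ℝ) * θ) : ℝ) : ℂ) * Complex.I by push_cast; ring]
      exact norm_exp_sub_one_sq _
    have hlt := hcl k
    nlinarith [norm_nonneg (Complex.exp ((θ:ℂ) * Complex.I) ^ k - 1)]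
  obtain ⟨θ, hr1, hr2, hwexp⟩ : ∃ θ : ℝ, -π < θ ∧ θ ≤ π ∧ w = Complex.exp ((θ:ℂ) * Complex.I) :=
    ⟨w.arg, Complex.neg_pi_lt_arg w, Complex.arg_le_pi w, hwexp⟩
  rcases lt_trichotomy θ 0 with hθ | hθ | hθ
  · exfalso
    apply haux (-θ) (by linarith) (by linarith)
    intro k
    have hconjw : Complex.exp (((-θ : ℝ):ℂ) * Complex.I) = (starRingEnd ℂ) w := by
      rw [hwexp, ← Complex.exp_conj, map_mul, Complex.conj_ofReal, Complex.conj_I]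
      push_cast
      ring_nf
    rw [hconjw, ← map_pow, show (1:ℂ) = (starRingEnd ℂ) 1 by simp, ← map_sub]
    rw [Complex.norm_conj]
    exact h k
  · rw [hwexp, hθ]
    simp
  · exact absurd (fun k => hwexp ▸ h k) (haux θ hθ hr2)

/-- Every continuous character of `S¹_ℚ` is `(π_N)^m`. -/
lemma char_form (χ : SolQ → ℂ) (hcont : Continuous χ)
    (hmul : ∀ x y : SolQ, χ (x * y) = χ x * χ y) (hnorm : ∀ x : SolQ, ‖χ x‖ = 1) :
    ∃ (n : ℕ+) (m : ℤ), ∀ x : SolQ, χ x = (x.1 n) ^ m := by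
  have hχne : ∀ x, χ x ≠ 0 := by
    intro x h
    have := hnorm x
    rw [h] at this
    simp at this
  have hone : (1 : SolQ) * 1 = 1 := Subtype.ext (funext fun n => one_mul _)
  have hχ1 : χ 1 = 1 := by
    have h := hmul 1 1
    rw [hone] at h
    have h2 : χ 1 * 1 = χ 1 * χ 1 := by rw [mul_one]; exact h
    exact (mul_left_cancel₀ (hχne 1) h2).symm
  -- the character ψ = χ ∘ ν of ℝ
  obtain ⟨c, hc⟩ : ∃ c : ℝ, ∀ t, χ (nuS t) = Complex.exp ((c : ℂ) * t * Complex.I) :=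
    char_real (fun t => χ (nuS t)) (hcont.comp continuous_nuS)
      (fun s t => by
        show χ (nuS (s + t)) = χ (nuS s) * χ (nuS t)
        rw [nuS_add, hmul]) (fun t => hnorm _)
  -- small subgroups are killed
  have hVopen : IsOpen {x : SolQ | ‖χ x - 1‖ < 1} := by
    have h1 : {x : SolQ | ‖χ x - 1‖ < 1} = χ ⁻¹' (Metric.ball 1 1) := by
      ext z
      simp [Metric.mem_ball, dist_eq_norm]
    rw [h1]
    exact Metric.isOpen_ball.preimage hcont
  obtain ⟨W, hWopen, hWV⟩ := isOpen_induced_iff.mp hVopen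
  have h1W : (1 : SolQ).1 ∈ W := by
    have : (1 : SolQ) ∈ {x : SolQ | ‖χ x - 1‖ < 1} := by
      simp [hχ1]
    rw [← hWV] at this
    exact this
  obtain ⟨I, u, hIu, hsub⟩ := isOpen_pi_iff.mp hWopen _ h1W
  set N : ℕ+ := ∏ i ∈ I, i with hN
  clear_value N
  have hsmall : ∀ a : Zhat, a.1 N = 0 → χ (phiS a) = 1 := by
    intro a ha
    apply circle_eq_one _ (hnorm _)
    intro k
    rw [← chi_phiS_pow χ hmul hχ1 a k]
    set b := nsmulZ k a with hb
    have hbN : b.1 N = 0 := by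
      rw [hb, nsmulZ_coord, ha, mul_zero]
    have hcoord : ∀ i : ℕ+, i ∈ I → (phiS b).1 i = 1 := by
      intro i hi
      obtain ⟨k', hk'⟩ : ∃ k' : ℕ+, i * k' = N := by
        have hdvd : i ∣ N := by rw [hN]; exact Finset.dvd_prod_of_mem (fun i => i) hi
        obtain ⟨c', hc'⟩ := hdvd
        exact ⟨c', hc'.symm⟩
      have hbi : b.1 i = 0 := by
        subst hk'
        have h3 := b.2 i k'
        rw [hbN, map_zero] at h3
        exact h3.symm
      rw [phiS_coord]
      unfold phiComp
      rw [hbi, ZMod.val_zero]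
      norm_num
    have hmem : phiS b ∈ {x : SolQ | ‖χ x - 1‖ < 1} := by
      rw [← hWV]
      apply hsub
      rw [Set.mem_pi]
      intro i hi
      rw [show (phiS b).1 i = (1 : SolQ).1 i from hcoord i hi]
      exact (hIu i hi).2
    exact hmem
  -- value of χ ∘ φ
  have hphi_val : ∀ a : Zhat,
      χ (phiS a) = Complex.exp ((c : ℂ) * (2 * π * (((a.1 N).val : ℕ) : ℝ)) * Complex.I) := by
    intro a
    set w : ℕ := (a.1 N).val with hw
    conv_lhs => rw [zhat_decomp a N]
    rw [phiS_add, hmul, hsmall _ (subZ_coord_self a N), mul_one, ← hw, phiS_iota_nat, hc]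
    congr 1
    push_cast
    ring
  -- c·N is an integer
  obtain ⟨m, hm⟩ : ∃ m : ℤ, c * ((N : ℕ+) : ℕ) = m := by
    have hiN : (iotaZ (((N : ℕ+) : ℕ) : ℤ)).1 N = 0 := by
      show ((((N : ℕ+) : ℕ) : ℤ) : ZMod ((N : ℕ+) : ℕ)) = 0
      push_cast
      exact ZMod.natCast_self _
    have h4 : χ (phiS (iotaZ (((N : ℕ+) : ℕ) : ℤ))) = 1 := hsmall _ hiN
    rw [phiS_iota_nat, hc] at h4
    have h5 : Complex.exp (((c * (2 * π * ((N : ℕ+) : ℕ)) : ℝ) : ℂ) * Complex.I)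
        = Complex.exp (((0 : ℝ) : ℂ) * Complex.I) := by
      rw [show (((c * (2 * π * ((N : ℕ+) : ℕ)) : ℝ) : ℂ) * Complex.I)
        = (c : ℂ) * ((2 * π * ((N : ℕ+) : ℕ) : ℝ) : ℂ) * Complex.I by push_cast; ring]
      rw [h4]
      simp
    obtain ⟨m, hm⟩ := exp_real_eq_iff h5
    refine ⟨m, ?_⟩
    have hπ : (2 : ℝ) * π ≠ 0 := by positivity
    apply mul_left_cancel₀ hπ
    rw [zero_add] at hm
    linear_combination hm
  refine ⟨N, m, fun x => ?_⟩
  obtain ⟨a, t, rfl⟩ := expS_surj x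
  set v : ℕ := (a.1 N).val with hv
  have hNne : ((((N : ℕ+) : ℕ) : ℝ)) ≠ 0 := by exact_mod_cast N.ne_zero
  have hL : χ (phiS a * nuS t)
      = Complex.exp (((c * (2 * π * v + t) : ℝ) : ℂ) * Complex.I) := by
    rw [hmul, hphi_val, ← hv, hc, ← Complex.exp_add]
    congr 1
    push_cast
    ring
  have hR : (phiS a * nuS t).1 N = Complex.exp ((((2 * π * v + t) / ((N : ℕ+) : ℕ) : ℝ) : ℂ)
      * Complex.I) := by
    rw [mul_coord, phiS_coord, nuS_coord]
    unfold phiComp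
    rw [← hv, ← Complex.exp_add]
    congr 1
    push_cast
    field_simp
  have hNC : ((((N : ℕ+) : ℕ) : ℂ)) ≠ 0 := by exact_mod_cast N.ne_zero
  rw [hL, hR, ← Complex.exp_int_mul]
  congr 1
  push_cast
  rw [show ((m : ℤ) : ℂ) = (c : ℂ) * (((N : ℕ+) : ℕ) : ℂ) by exact_mod_cast hm.symm]
  field_simp

/-- The positive-natural denominator of a rational. -/
def pden (q : ℚ) : ℕ+ := ⟨q.den, q.den_pos⟩

lemma pden_coe (q : ℚ) : ((pden q : ℕ+) : ℕ) = q.den := rfl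

lemma chiQ_def (q : ℚ) (x : SolQ) : chiQ q x = (x.1 (pden q)) ^ q.num := rfl

lemma chiQ_continuous (q : ℚ) : Continuous (chiQ q) := by
  have h1 : Continuous fun x : SolQ => x.1 (pden q) :=
    (continuous_apply _).comp continuous_subtype_val
  rw [continuous_iff_continuousAt]
  intro x
  have h2 : ContinuousAt (fun z : ℂ => z ^ q.num) (x.1 (pden q)) :=
    continuousAt_zpow₀ _ _ (Or.inl (solq_coord_ne x _))
  exact ContinuousAt.comp (f := fun y : SolQ => y.1 (pden q)) (x := x) h2 h1.continuousAt

lemma chiQ_norm (q : ℚ) (x : SolQ) : ‖chiQ q x‖ = 1 := by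
  rw [chiQ_def, norm_zpow, solq_coord_norm, one_zpow]

lemma chiQ_mul (q : ℚ) (x y : SolQ) : chiQ q (x * y) = chiQ q x * chiQ q y := by
  rw [chiQ_def, chiQ_def, chiQ_def, mul_coord, mul_zpow]

lemma exp_identity (q : ℚ) (k n : ℕ+) (hk : pden q * k = n) :
    ((((k : ℕ+) : ℕ) : ℚ) * (q.num : ℚ)) = q * (((n : ℕ+) : ℕ) : ℚ) := by
  have hn : ((n : ℕ+) : ℕ) = q.den * ((k : ℕ+) : ℕ) := by
    rw [← hk, PNat.mul_coe, pden_coe]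
  have hden : ((q.den : ℚ)) ≠ 0 := by
    exact_mod_cast q.den_pos.ne'
  have hq2 : q * ((q.den : ℕ) : ℚ) = ((q.num : ℤ) : ℚ) := by
    nth_rewrite 1 [← Rat.num_div_den q]
    exact div_mul_cancel₀ _ hden
  rw [hn]
  push_cast
  linear_combination (-((((k : ℕ+) : ℕ) : ℚ))) * hq2

lemma chiQ_zpow_coord (q : ℚ) (k n : ℕ+) (hk : pden q * k = n)
    (x : SolQ) : chiQ q x = (x.1 n) ^ ((((k : ℕ+) : ℕ) : ℤ) * q.num) := by
  rw [chiQ_def]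
  exact coord_zpow x _ k n hk q.num

lemma chiQ_add_eq (q q' : ℚ) (x : SolQ) : chiQ (q + q') x = chiQ q x * chiQ q' x := by
  set d : ℕ+ := pden q with hd
  set d' : ℕ+ := pden q' with hd'
  set D : ℕ+ := pden (q + q') with hD
  set L : ℕ+ := d * d' with hL
  obtain ⟨kD, hkD⟩ : ∃ kD : ℕ+, D * kD = L := by
    have hdvd : D ∣ L := by
      rw [PNat.dvd_iff]
      show (q + q').den ∣ ((L : ℕ+) : ℕ)
      rw [hL, PNat.mul_coe]
      exact Rat.add_den_dvd q q'
    obtain ⟨c', hc'⟩ := hdvd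
    exact ⟨c', hc'.symm⟩
  rw [chiQ_zpow_coord (q + q') kD L hkD x, chiQ_zpow_coord q d' L rfl x,
    chiQ_zpow_coord q' d L (by rw [← hd']; exact mul_comm d' d) x,
    ← zpow_add₀ (solq_coord_ne x L)]
  congr 1
  have e1 := exp_identity (q + q') kD L hkD
  have e2 := exp_identity q d' L rfl
  have e3 := exp_identity q' d L (by rw [← hd']; exact mul_comm d' d)
  have : ((((kD : ℕ+) : ℕ) : ℚ) * ((q + q').num : ℚ))
      = (((d' : ℕ+) : ℕ) : ℚ) * (q.num : ℚ) + (((d : ℕ+) : ℕ) : ℚ) * (q'.num : ℚ) := by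
    rw [e1, e2, e3]
    ring
  exact_mod_cast this

lemma chiQ_injective : Function.Injective chiQ := by
  intro q q' h
  by_contra hne
  have hnuS : ∀ (r : ℚ) (t : ℝ),
      chiQ r (nuS t) = Complex.exp ((((r : ℝ) * t : ℝ) : ℂ) * Complex.I) := by
    intro r t
    rw [chiQ_def, nuS_coord, ← Complex.exp_int_mul]
    congr 1
    have hden : ((r.den : ℝ)) ≠ 0 := by exact_mod_cast r.den_pos.ne'
    simp only [pden_coe]
    push_cast [Rat.cast_def]
    field_simp
  have hQR : ((q : ℝ)) ≠ (q' : ℝ) := by exact_mod_cast hne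
  set t0 : ℝ := π / ((q : ℝ) - (q' : ℝ)) with ht0
  have hdne : ((q : ℝ)) - (q' : ℝ) ≠ 0 := sub_ne_zero.mpr hQR
  have heq : Complex.exp ((((q : ℝ) * t0 : ℝ) : ℂ) * Complex.I)
      = Complex.exp ((((q' : ℝ) * t0 : ℝ) : ℂ) * Complex.I) := by
    rw [← hnuS q t0, ← hnuS q' t0, h]
  obtain ⟨m, hm⟩ := exp_real_eq_iff heq
  have hpi : ((q : ℝ) - (q' : ℝ)) * t0 = π := by
    rw [ht0]
    exact mul_div_cancel₀ _ hdne
  have h2 : π = 2 * π * m := by nlinarith [hm, hpi]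
  have h3 : (1 : ℝ) = 2 * (m : ℝ) := by
    have hπ : (π : ℝ) ≠ 0 := Real.pi_ne_zero
    apply mul_left_cancel₀ hπ
    linarith [h2]
  have h4 : (1 : ℤ) = 2 * m := by exact_mod_cast h3
  omega

lemma chiQ_surjective (χ : SolQ → ℂ) (hcont : Continuous χ)
    (hmul : ∀ x y : SolQ, χ (x * y) = χ x * χ y) (hnorm : ∀ x : SolQ, ‖χ x‖ = 1) :
    ∃ q : ℚ, χ = chiQ q := by
  obtain ⟨n, m, hx⟩ := char_form χ hcont hmul hnorm
  set q : ℚ := Rat.divInt m ((n : ℕ+) : ℕ) with hq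
  refine ⟨q, funext fun x => ?_⟩
  obtain ⟨k, hk⟩ : ∃ k : ℕ+, pden q * k = n := by
    have hdvd : pden q ∣ n := by
      rw [PNat.dvd_iff]
      show q.den ∣ ((n : ℕ+) : ℕ)
      have := Rat.den_dvd m (((n : ℕ+) : ℕ) : ℤ)
      rw [← hq] at this
      exact_mod_cast this
    obtain ⟨c', hc'⟩ := hdvd
    exact ⟨c', hc'.symm⟩
  rw [hx x, chiQ_zpow_coord q k n hk x]
  congr 1
  have hnne : ((((n : ℕ+) : ℕ) : ℚ)) ≠ 0 := by exact_mod_cast n.ne_zero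
  have hqn : q * (((n : ℕ+) : ℕ) : ℚ) = (m : ℚ) := by
    rw [hq, Rat.divInt_eq_div]
    push_cast
    field_simp
  have := exp_identity q k n hk
  rw [hqn] at this
  exact_mod_cast this.symm

/-- Every continuous character `χ : S¹_ℚ → S¹` has the form
`χ = (π_n)^m`, and `q ↦ χ_q` is a group isomorphism from `(ℚ, +)` onto the
Pontryagin dual of `S¹_ℚ`. -/
theorem statement11 :
    (∀ χ : SolQ → ℂ, Continuous χ → (∀ x y : SolQ, χ (x * y) = χ x * χ y) →
      (∀ x : SolQ, ‖χ x‖ = 1) →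
      ∃ (n : ℕ+) (m : ℤ), ∀ x : SolQ, χ x = (x.1 n) ^ m) ∧
    (∀ q : ℚ, Continuous (chiQ q) ∧ (∀ x : SolQ, ‖chiQ q x‖ = 1) ∧
      ∀ x y : SolQ, chiQ q (x * y) = chiQ q x * chiQ q y) ∧
    (∀ q q' : ℚ, ∀ x : SolQ, chiQ (q + q') x = chiQ q x * chiQ q' x) ∧
    Function.Injective chiQ ∧
    (∀ χ : SolQ → ℂ, Continuous χ → (∀ x y : SolQ, χ (x * y) = χ x * χ y) →
      (∀ x : SolQ, ‖χ x‖ = 1) → ∃ q : ℚ, χ = chiQ q) := by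
  exact ⟨char_form, fun q => ⟨chiQ_continuous q, chiQ_norm q, chiQ_mul q⟩,
    chiQ_add_eq, chiQ_injective, chiQ_surjective⟩

end
end
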